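/- arXiv:2310.12265 — 4 statements merged into one kernel-verified Lean document; each statement's English description precedes it below -/
import Mathlib

section
/- Let G be a group and f : G → ℝ≥0 a subadditive function with f(x) = 0 if and only if x = id, and suppose furthermore that f is constant on conjugacy classes, i.e., f(h⁻¹gh) = f(g) for all g, h ∈ G. Then for any x ≤_f z in G, the map y ↦ x y⁻¹ z maps the interval [x, z]_f = {y : x ≤_f y and y ≤_f z} bijectively to itself and reverses the order ≤_f on this interval (it is a poset antiautomorphism of [x, z]_f); in particular x y⁻¹ z ∈ [x, z]_f whenever y ∈ [x, z]_f. -/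
/-- Let `G` be a group and `f : G → ℝ≥0` a subadditive function with `f x = 0` iff `x = 1`,
and suppose `f` is constant on conjugacy classes.  Then for any `x ≤_f z`, the map
`y ↦ x * y⁻¹ * z` maps the interval `[x, z]_f` bijectively to itself and reverses the
order `≤_f` on it; in particular `x * y⁻¹ * z ∈ [x, z]_f` whenever `y ∈ [x, z]_f`. -/
theorem stmt1 {G : Type*} [Group G] (f : G → NNReal)
    (hsub : ∀ x y : G, f (x * y) ≤ f x + f y)
    (hzero : ∀ x : G, f x = 0 ↔ x = 1)
    (hconj : ∀ g h : G, f (h⁻¹ * g * h) = f g)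
    (x z : G) (hxz : f x + f (x⁻¹ * z) = f z) :
    (∀ y ∈ {y : G | (f x + f (x⁻¹ * y) = f y) ∧ (f y + f (y⁻¹ * z) = f z)},
        x * y⁻¹ * z ∈ {y : G | (f x + f (x⁻¹ * y) = f y) ∧ (f y + f (y⁻¹ * z) = f z)}) ∧
    Set.BijOn (fun y => x * y⁻¹ * z)
      {y : G | (f x + f (x⁻¹ * y) = f y) ∧ (f y + f (y⁻¹ * z) = f z)}
      {y : G | (f x + f (x⁻¹ * y) = f y) ∧ (f y + f (y⁻¹ * z) = f z)} ∧
    (∀ y₁ ∈ {y : G | (f x + f (x⁻¹ * y) = f y) ∧ (f y + f (y⁻¹ * z) = f z)},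
      ∀ y₂ ∈ {y : G | (f x + f (x⁻¹ * y) = f y) ∧ (f y + f (y⁻¹ * z) = f z)},
        (f y₁ + f (y₁⁻¹ * y₂) = f y₂ ↔
          f (x * y₂⁻¹ * z) + f ((x * y₂⁻¹ * z)⁻¹ * (x * y₁⁻¹ * z)) = f (x * y₁⁻¹ * z))) := by
  -- f is invariant under swapping products
  have hcomm : ∀ a b : G, f (a * b) = f (b * a) := by
    intro a b
    have h := hconj (a * b) a
    rw [show a⁻¹ * (a * b) * a = b * a by group] at h
    exact h.symm
  -- for y in the interval, f (x * y⁻¹ * z) = f x + f (y⁻¹ * z)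
  have key : ∀ y : G, (f x + f (x⁻¹ * y) = f y ∧ f y + f (y⁻¹ * z) = f z) →
      f (x * y⁻¹ * z) = f x + f (y⁻¹ * z) := by
    rintro y ⟨h1, h2⟩
    refine le_antisymm ?_ ?_
    · have h := hsub x (y⁻¹ * z)
      rwa [show x * (y⁻¹ * z) = x * y⁻¹ * z by group] at h
    · have hconj' : f (z⁻¹ * y * x⁻¹ * z) = f (x⁻¹ * y) := by
        have h := hconj (y * x⁻¹) z
        rw [show z⁻¹ * (y * x⁻¹) * z = z⁻¹ * y * x⁻¹ * z by group] at h
        rw [h, hcomm]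
      have hz : f z ≤ f (x * y⁻¹ * z) + f (x⁻¹ * y) := by
        have h := hsub (x * y⁻¹ * z) (z⁻¹ * y * x⁻¹ * z)
        rw [show (x * y⁻¹ * z) * (z⁻¹ * y * x⁻¹ * z) = z by group, hconj'] at h
        exact h
      have hsum : f x + f (y⁻¹ * z) + f (x⁻¹ * y) = f z := by
        rw [← h2, ← h1]; ring
      have : f x + f (y⁻¹ * z) + f (x⁻¹ * y) ≤ f (x * y⁻¹ * z) + f (x⁻¹ * y) := by
        rw [hsum]; exact hz
      exact le_of_add_le_add_right this
  -- membership of the image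
  have mem : ∀ y ∈ {y : G | (f x + f (x⁻¹ * y) = f y) ∧ (f y + f (y⁻¹ * z) = f z)},
      x * y⁻¹ * z ∈ {y : G | (f x + f (x⁻¹ * y) = f y) ∧ (f y + f (y⁻¹ * z) = f z)} := by
    rintro y ⟨h1, h2⟩
    have hk := key y ⟨h1, h2⟩
    constructor
    · rw [show x⁻¹ * (x * y⁻¹ * z) = y⁻¹ * z by group, hk]
    · have hconj' : f ((x * y⁻¹ * z)⁻¹ * z) = f (x⁻¹ * y) := by
        have h := hconj (y * x⁻¹) z
        rw [show z⁻¹ * (y * x⁻¹) * z = (x * y⁻¹ * z)⁻¹ * z by group] at h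
        rw [h, hcomm]
      rw [hconj', hk, ← h2, ← h1]; ring
  refine ⟨mem, ⟨mem, ?_, ?_⟩, ?_⟩
  · -- injectivity
    intro a _ b _ hab
    simpa using hab
  · -- surjectivity
    rintro w ⟨h1, h2⟩
    refine ⟨z * w⁻¹ * x, ?_, by group⟩
    have e1 : x⁻¹ * (z * w⁻¹ * x) = x⁻¹ * (z * w⁻¹) * x := by group
    have e2 : f (x⁻¹ * (z * w⁻¹ * x)) = f (w⁻¹ * z) := by
      rw [e1, hconj, hcomm]
    have e3 : (z * w⁻¹ * x)⁻¹ * z = x⁻¹ * w := by group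
    have hy : f (z * w⁻¹ * x) = f x + f (w⁻¹ * z) := by
      refine le_antisymm ?_ ?_
      · have h := hsub x (x⁻¹ * (z * w⁻¹ * x))
        rw [show x * (x⁻¹ * (z * w⁻¹ * x)) = z * w⁻¹ * x by group, e2] at h
        exact h
      · have hz : f z ≤ f (z * w⁻¹ * x) + f (x⁻¹ * w) := by
          have h := hsub (z * w⁻¹ * x) (x⁻¹ * w)
          rwa [show (z * w⁻¹ * x) * (x⁻¹ * w) = z by group] at h
        have hsum : f x + f (w⁻¹ * z) + f (x⁻¹ * w) = f z := by
          rw [← h2, ← h1]; ring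
        have : f x + f (w⁻¹ * z) + f (x⁻¹ * w) ≤ f (z * w⁻¹ * x) + f (x⁻¹ * w) := by
          rw [hsum]; exact hz
        exact le_of_add_le_add_right this
    refine ⟨?_, ?_⟩
    · rw [e2, hy]
    · rw [e3, hy, ← h2, ← h1]; ring
  · -- order reversal
    rintro y₁ ⟨h11, h12⟩ y₂ ⟨h21, h22⟩
    have k1 := key y₁ ⟨h11, h12⟩
    have k2 := key y₂ ⟨h21, h22⟩
    have emid : f ((x * y₂⁻¹ * z)⁻¹ * (x * y₁⁻¹ * z)) = f (y₁⁻¹ * y₂) := by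
      have h := hconj (y₂ * y₁⁻¹) z
      rw [show z⁻¹ * (y₂ * y₁⁻¹) * z = (x * y₂⁻¹ * z)⁻¹ * (x * y₁⁻¹ * z) by group] at h
      rw [h, hcomm]
    rw [emid, k1, k2]
    constructor
    · intro h
      have : f y₁ + (f (y₂⁻¹ * z) + f (y₁⁻¹ * y₂)) = f y₁ + f (y₁⁻¹ * z) := by
        rw [h12, ← h22, ← h]; ring
      have h' := add_left_cancel this
      rw [← h']; ring
    · intro h
      have h' : f (y₂⁻¹ * z) + f (y₁⁻¹ * y₂) = f (y₁⁻¹ * z) := by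
        have := add_left_cancel (a := f x)
          (by rw [← add_assoc, h] : f x + (f (y₂⁻¹ * z) + f (y₁⁻¹ * y₂)) = f x + f (y₁⁻¹ * z))
        exact this
      have : f y₁ + f (y₁⁻¹ * y₂) + f (y₂⁻¹ * z) = f y₂ + f (y₂⁻¹ * z) := by
        rw [h22, ← h12, ← h']; ring
      exact add_right_cancel this
end

section
/- Let G be a group and f : G → ℕ a subadditive function such that f(x) = 0 if and only if x = id. Then the poset (G, ≤_f) is f-graded — meaning that whenever y covers x in the order ≤_f one has f(y) = f(x) + 1 — if and only if f equals the length function ℓ_T of G with respect to the generating set T := {t ∈ G : f(t) = 1}, where ℓ_T(x) is the least k such that x is a product of k elements of T (in particular, in that case T generates G). -/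
private lemma prod_le_len {G : Type*} [Group G] (f : G → ℕ)
    (hsub : ∀ x y : G, f (x * y) ≤ f x + f y) (hone : f 1 = 0) :
    ∀ l : List G, (∀ t ∈ l, f t = 1) → f l.prod ≤ l.length := by
  intro l
  induction l with
  | nil => intro _; simpa using hone.le
  | cons t l ih =>
    intro h
    simp only [List.prod_cons, List.length_cons]
    have h1 := ih (fun s hs => h s (List.mem_cons_of_mem _ hs))
    have ht := h t List.mem_cons_self
    have := hsub t l.prod
    omega

/-- Let `G` be a group and `f : G → ℕ` a subadditive function with `f x = 0` iff `x = 1`.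
The poset `(G, ≤_f)` is `f`-graded (each cover relation raises `f` by exactly `1`) if and
only if `f` is the length function `ℓ_T` of `G` with respect to the generating set
`T = {t : G | f t = 1}`, i.e., for every `x`, `f x` is the least `k` such that `x` is a
product of `k` elements of `T` (in particular every `x` is such a product, so `T`
generates `G`). -/
theorem stmt2 {G : Type*} [Group G] (f : G → ℕ)
    (hsub : ∀ x y : G, f (x * y) ≤ f x + f y)
    (hzero : ∀ x : G, f x = 0 ↔ x = 1) :
    (∀ x y : G,
        (f x + f (x⁻¹ * y) = f y ∧ x ≠ y) →
        (¬ ∃ z : G, (f x + f (x⁻¹ * z) = f z ∧ x ≠ z) ∧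
          (f z + f (z⁻¹ * y) = f y ∧ z ≠ y)) →
        f y = f x + 1) ↔
    (∀ x : G,
        (∃ l : List G, (∀ t ∈ l, f t = 1) ∧ l.length = f x ∧ l.prod = x) ∧
        (∀ l : List G, (∀ t ∈ l, f t = 1) → l.prod = x → f x ≤ l.length)) := by
  have hone : f 1 = 0 := (hzero 1).mpr rfl
  classical
  constructor
  · -- graded → length function
    intro hg
    have key : ∀ n x, f x = n →
        ∃ l : List G, (∀ t ∈ l, f t = 1) ∧ l.length = f x ∧ l.prod = x := by
      intro n
      induction n using Nat.strong_induction_on with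
      | _ n ih =>
        intro x hx
        rcases Nat.eq_zero_or_pos n with h0 | hpos
        · subst h0
          exact ⟨[], by simp, by simp [hx], by simp [((hzero x).mp hx).symm]⟩
        · have hx1 : x ≠ 1 := by
            intro h; rw [h, hone] at hx; omega
          set P : ℕ → Prop := fun m =>
            ∃ z, f z + f (z⁻¹ * x) = f x ∧ z ≠ x ∧ f z = m with hP
          have hP0 : P 0 := ⟨1, by simp [hone], fun h => hx1 h.symm, hone⟩
          obtain ⟨z, hz1, hz2, hz3⟩ := Nat.findGreatest_spec (Nat.zero_le (f x)) hP0
          have hmax : ¬ ∃ w : G, (f z + f (z⁻¹ * w) = f w ∧ z ≠ w) ∧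
              (f w + f (w⁻¹ * x) = f x ∧ w ≠ x) := by
            rintro ⟨w, ⟨hw1, hw2⟩, ⟨hw3, hw4⟩⟩
            have hzw : f (z⁻¹ * w) ≠ 0 := fun h0 =>
              hw2 (inv_mul_eq_one.mp ((hzero _).mp h0))
            have hzw' : z⁻¹ * w ≠ 1 := fun h => by rw [h, hone] at hzw; exact hzw rfl
            have hzw0 : 0 < f (z⁻¹ * w) := Nat.pos_of_ne_zero hzw
            have hlt : Nat.findGreatest P (f x) < f w := by omega
            have hle : f w ≤ f x := by omega
            exact Nat.findGreatest_is_greatest hlt hle ⟨w, hw3, hw4, rfl⟩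
          have hcov := hg z x ⟨hz1, hz2⟩ hmax
          have hfz : f z < n := by omega
          obtain ⟨l, hl1, hl2, hl3⟩ := ih (f z) hfz z rfl
          refine ⟨l ++ [z⁻¹ * x], ?_, ?_, ?_⟩
          · intro t ht
            rcases List.mem_append.mp ht with h | h
            · exact hl1 t h
            · simp at h; subst h; omega
          · simp [hl2]; omega
          · simp [hl3]
    intro x
    refine ⟨key (f x) x rfl, fun l hl hp => ?_⟩
    have := prod_le_len f hsub hone l hl
    rw [hp] at this; exact this
  · -- length function → graded
    intro h x y ⟨hle, hne⟩ hnc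
    have hxy1 : f (x⁻¹ * y) ≠ 0 := by
      intro h0
      apply hne
      have h2 := (hzero _).mp h0
      have h3 : x * (x⁻¹ * y) = x * 1 := by rw [h2]
      simpa using h3.symm
    by_cases h1 : f (x⁻¹ * y) = 1
    · omega
    · exfalso
      obtain ⟨l, hl1, hl2, hl3⟩ := (h (x⁻¹ * y)).1
      match l, hl2 with
      | [], hl2 => simp at hl2; omega
      | t :: l', hl2 =>
        have ht : f t = 1 := hl1 t List.mem_cons_self
        have hl1' : ∀ s ∈ l', f s = 1 := fun s hs => hl1 s (List.mem_cons_of_mem _ hs)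
        simp only [List.prod_cons] at hl3
        simp only [List.length_cons] at hl2
        set z := x * t with hz
        have hzy : z⁻¹ * y = l'.prod := by
          rw [hz, mul_inv_rev, mul_assoc, ← hl3]
          group
        have hfzy : f (z⁻¹ * y) ≤ l'.length := by
          rw [hzy]; exact prod_le_len f hsub hone l' hl1'
        have hfz : f z ≤ f x + 1 := by
          have := hsub x t; rw [ht] at this; exact this
        have hyz : f y ≤ f z + f (z⁻¹ * y) := by
          have := hsub z (z⁻¹ * y)
          rwa [mul_inv_cancel_left] at this
        -- arithmetic: f y = f x + f(x⁻¹y), f(x⁻¹y) = l'.length + 1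
        have hfz' : f z = f x + 1 := by omega
        have hfzy' : f (z⁻¹ * y) = l'.length := by omega
        apply hnc
        refine ⟨z, ⟨?_, ?_⟩, ?_, ?_⟩
        · have : x⁻¹ * z = t := by rw [hz]; group
          rw [this, ht]; omega
        · intro hxz
          have : t = 1 := by
            have := congrArg (x⁻¹ * ·) hxz
            simpa [hz] using this.symm
          rw [this, hone] at ht; omega
        · omega
        · intro hzy'
          have : f (z⁻¹ * y) = 0 := by
            rw [hzy']; simpa using hone
          omega
end

section
/- Let w ∈ G(m, p, n). If ℓ_R(w) > codimfix(w), then there exists a reflection t of G(m, p, n) such that t ≤_{ℓ_R} w but t is not ≤_{cdf} w, i.e., t belongs to [id, w]_{ℓ_R} but not to [id, w]_{cdf}. -/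
open Equiv Finset
@[ext]
structure GW (m n : ℕ) where
  perm : Equiv.Perm (Fin n)
  wt : Fin n → ZMod m
namespace GW
variable {m n : ℕ}
instance : Mul (GW m n) :=
  ⟨fun x y => ⟨x.perm * y.perm, fun i => x.wt i + y.wt (x.perm⁻¹ i)⟩⟩
instance : One (GW m n) := ⟨⟨1, 0⟩⟩
instance : Inv (GW m n) := ⟨fun x => ⟨x.perm⁻¹, fun i => -x.wt (x.perm i)⟩⟩
@[simp] theorem mul_perm (x y : GW m n) : (x * y).perm = x.perm * y.perm := rfl
@[simp] theorem mul_wt (x y : GW m n) (i : Fin n) :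
    (x * y).wt i = x.wt i + y.wt (x.perm⁻¹ i) := rfl
@[simp] theorem one_perm : (1 : GW m n).perm = 1 := rfl
@[simp] theorem one_wt (i : Fin n) : (1 : GW m n).wt i = 0 := rfl
@[simp] theorem inv_perm (x : GW m n) : (x⁻¹).perm = x.perm⁻¹ := rfl
@[simp] theorem inv_wt (x : GW m n) (i : Fin n) : (x⁻¹).wt i = -x.wt (x.perm i) := rfl
private theorem gw_mul_assoc (a b c : GW m n) : a * b * c = a * (b * c) := by
  ext i
  · simp [mul_assoc]
  · simp [mul_inv_rev, add_assoc]
private theorem gw_one_mul (a : GW m n) : 1 * a = a := by ext i <;> simp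
private theorem gw_mul_one (a : GW m n) : a * 1 = a := by ext i <;> simp
private theorem gw_inv_mul_cancel (a : GW m n) : a⁻¹ * a = 1 := by ext i <;> simp
instance : Group (GW m n) where
  mul := (· * ·)
  one := 1
  inv := Inv.inv
  mul_assoc := gw_mul_assoc
  one_mul := gw_one_mul
  mul_one := gw_mul_one
  inv_mul_cancel := gw_inv_mul_cancel
def cycleOf (w : GW m n) (i : Fin n) : Finset (Fin n) :=
  Finset.univ.filter fun j => w.perm.SameCycle i j
def cycles (w : GW m n) : Finset (Finset (Fin n)) :=
  Finset.univ.image fun i => w.cycleOf i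
def cycWt (w : GW m n) (C : Finset (Fin n)) : ZMod m := ∑ i ∈ C, w.wt i
def numCycles (w : GW m n) : ℕ := (cycles w).card
def c0 (w : GW m n) : ℕ := ((cycles w).filter fun C => cycWt w C = 0).card
def codimfix (w : GW m n) : ℕ := n - c0 w
def wtTot (w : GW m n) : ZMod m := ∑ i, w.wt i

-- NEW PIECES BELOW --

/-- The base relation on cycles of `w` induced by `u`: two cycles of `w` are related if
some cycle of `u` meets both of them. -/
def piRelBase (u w : GW m n) (C₁ C₂ : Finset (Fin n)) : Prop :=
  C₁ ∈ cycles w ∧ C₂ ∈ cycles w ∧ ∃ D ∈ cycles u, (D ∩ C₁).Nonempty ∧ (D ∩ C₂).Nonempty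

/-- The equivalence relation on the cycles of `w` generated by `piRelBase`. -/
def piRel (u w : GW m n) : Finset (Fin n) → Finset (Fin n) → Prop :=
  Relation.EqvGen (piRelBase u w)

open Classical in
/-- The part of the partition `Π_u(w)` containing the cycle `C` of `w`. -/
noncomputable def piPart (u w : GW m n) (C : Finset (Fin n)) : Finset (Finset (Fin n)) :=
  (cycles w).filter fun C' => piRel u w C C'

/-- The set partition `Π_u(w)` of the cycles of `w`, as the set of its parts. -/
noncomputable def piParts (u w : GW m n) : Finset (Finset (Finset (Fin n))) :=
  (cycles w).image fun C => piPart u w C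

/-- The weight of a collection `B` of cycles: the sum of the weights of its cycles. -/
def partWt (w : GW m n) (B : Finset (Finset (Fin n))) : ZMod m :=
  ∑ C ∈ B, cycWt w C

open Classical in
/-- The number of parts of `Π_u(w)` of nonzero total weight. -/
noncomputable def piPartsNonzeroWt (u w : GW m n) : ℕ :=
  ((piParts u w).filter fun B => partWt w B ≠ 0).card

/-- The support of a collection of cycles: the union of the cycles' underlying sets. -/
def supp (B : Finset (Finset (Fin n))) : Finset (Fin n) := B.sup id

/-- Restriction of a permutation to an invariant set `A` (junk value `1` if `A` is
not invariant): it agrees with `σ` on `A` and is the identity off `A`. -/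
noncomputable def restrictPerm (σ : Equiv.Perm (Fin n)) (A : Finset (Fin n)) :
    Equiv.Perm (Fin n) :=
  if h : ∀ i, σ i ∈ A ↔ i ∈ A then
    { toFun := fun i => if i ∈ A then σ i else i
      invFun := fun i => if i ∈ A then σ.symm i else i
      left_inv := by
        intro i
        by_cases hi : i ∈ A
        · simp [hi, (h i).mpr hi]
        · simp [hi]
      right_inv := by
        intro j
        by_cases hj : j ∈ A
        · have hs : σ.symm j ∈ A := by
            have h2 := h (σ.symm j)
            rw [Equiv.apply_symm_apply] at h2
            exact h2.mp hj
          simp [hj, hs]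
        · simp [hj] }
  else 1


/-- The restriction `x|_A` of `x` to a subset `A` of `{1,…,n}` (stabilized by `x`):
it agrees with `x` on `A` and acts as the identity, with weight `0`, off `A`. -/
noncomputable def restrict (x : GW m n) (A : Finset (Fin n)) : GW m n :=
  ⟨restrictPerm x.perm A, fun i => if i ∈ A then x.wt i else 0⟩

/-- The cycles of `x` contained in `A`; for `x = y|_A` this gives the cycles of the
restriction of `y` to `A`, viewed as an element of `G(m,1,#A)`. -/
def cyclesIn (x : GW m n) (A : Finset (Fin n)) : Finset (Finset (Fin n)) :=
  (cycles x).filter fun C => C ⊆ A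

/-- The monomial matrix representing `w`: the nonzero entry in column `j` sits in row
`w.perm j` and equals `ζ^(a_(w.perm j))`, where `ζ = exp(2πi/m)`. -/
noncomputable def toMatrix (w : GW m n) : Matrix (Fin n) (Fin n) ℂ :=
  Matrix.of fun i j =>
    if w.perm j = i then Complex.exp (2 * Real.pi * Complex.I * ((w.wt i).val : ℂ) / (m : ℂ))
    else 0

/-- `S` (a set of cycles of `w`) can be partitioned into singletons whose weight is
`0 (mod p)` and pairs of cycles whose weights sum to `0` in `ℤ/mℤ`; encoded by an
involution pairing up the cycles. -/
def PairedUp (p : ℕ) (hpm : p ∣ m) (w : GW m n) (S : Finset (Finset (Fin n))) : Prop :=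
  ∃ π : {C // C ∈ S} → {C // C ∈ S}, Function.Involutive π ∧
    (∀ C, π C = C → ZMod.castHom hpm (ZMod p) (cycWt w C.1) = 0) ∧
    (∀ C, π C ≠ C → cycWt w C.1 + cycWt w (π C).1 = 0)

/-- Membership in `G(m,p,n)`: the total weight is `0 (mod p)`. -/
def Gmem (p : ℕ) (hpm : p ∣ m) (w : GW m n) : Prop :=
  ZMod.castHom hpm (ZMod p) (wtTot w) = 0

/-- A reflection of `G(m,p,n)`: an element of the group whose fixed space has codimension 1. -/
def IsRefl (p : ℕ) (hpm : p ∣ m) (t : GW m n) : Prop :=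
  Gmem p hpm t ∧ codimfix t = 1

/-- The reflection length of `w` with respect to the reflections of `G(m,p,n)`. -/
noncomputable def lR (p : ℕ) (hpm : p ∣ m) (w : GW m n) : ℕ :=
  sInf {k | ∃ l : List (GW m n), (∀ t ∈ l, IsRefl p hpm t) ∧ l.length = k ∧ l.prod = w}

/-- The order `≤_f` determined by a subadditive function `f`. -/
def leF (f : GW m n → ℕ) (x y : GW m n) : Prop := f x + f (x⁻¹ * y) = f y

/-- The interval `[id, w]_f` inside the poset `(G(m,p,n), ≤_f)`. -/
def interval (p : ℕ) (hpm : p ∣ m) (f : GW m n → ℕ) (w : GW m n) : Set (GW m n) :=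
  {u | Gmem p hpm u ∧ leF f u w}

/-- A vector `v ∈ ℂⁿ` is regular for `G(m,p,n)` if it is fixed by no reflection. -/
def IsRegularVec (p : ℕ) (hpm : p ∣ m) (v : Fin n → ℂ) : Prop :=
  ∀ t : GW m n, IsRefl p hpm t → (toMatrix t).mulVec v ≠ v

/-- An element `w ∈ G(m,p,n)` is regular if it has an eigenvector that is a regular vector. -/
def IsRegularElt (p : ℕ) (hpm : p ∣ m) (w : GW m n) : Prop :=
  ∃ v : Fin n → ℂ, v ≠ 0 ∧ (∃ c : ℂ, (toMatrix w).mulVec v = c • v) ∧ IsRegularVec p hpm v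

end GW


-- ===================================================================
-- Auxiliary development for stmt3
-- ===================================================================
namespace GW

open Equiv Equiv.Perm Multiset

variable {m n : ℕ}

/-! ### Basic facts about cycles -/

theorem mem_cycleOf {w : GW m n} {i j : Fin n} : j ∈ w.cycleOf i ↔ w.perm.SameCycle i j := by
  simp [GW.cycleOf]

theorem self_mem_cycleOf (w : GW m n) (i : Fin n) : i ∈ w.cycleOf i :=
  mem_cycleOf.2 (Equiv.Perm.SameCycle.refl _ _)

theorem cycleOf_eq_of_mem {w : GW m n} {i j : Fin n} (h : j ∈ w.cycleOf i) :
    w.cycleOf j = w.cycleOf i := by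
  have hij := mem_cycleOf.1 h
  ext x
  simp only [mem_cycleOf]
  exact ⟨fun hx => hij.trans hx, fun hx => hij.symm.trans hx⟩

theorem cycleOf_mem_cycles (w : GW m n) (i : Fin n) : w.cycleOf i ∈ cycles w :=
  Finset.mem_image_of_mem _ (Finset.mem_univ i)

theorem mem_cycles_iff {w : GW m n} {C : Finset (Fin n)} :
    C ∈ cycles w ↔ ∃ i, C = w.cycleOf i := by
  constructor
  · intro h
    obtain ⟨i, -, hi⟩ := Finset.mem_image.1 h
    exact ⟨i, hi.symm⟩
  · rintro ⟨i, rfl⟩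
    exact cycleOf_mem_cycles w i

theorem eq_cycleOf_of_mem_cycles {w : GW m n} {C : Finset (Fin n)} (hC : C ∈ cycles w)
    {i : Fin n} (hi : i ∈ C) : w.cycleOf i = C := by
  obtain ⟨z, rfl⟩ := mem_cycles_iff.1 hC
  exact cycleOf_eq_of_mem hi

theorem cycles_nonempty {w : GW m n} {C : Finset (Fin n)} (hC : C ∈ cycles w) : C.Nonempty := by
  obtain ⟨z, rfl⟩ := mem_cycles_iff.1 hC
  exact ⟨z, self_mem_cycleOf w z⟩

theorem cycles_eq_of_mem_mem {w : GW m n} {C D : Finset (Fin n)} (hC : C ∈ cycles w)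
    (hD : D ∈ cycles w) {i : Fin n} (hiC : i ∈ C) (hiD : i ∈ D) : C = D := by
  rw [← eq_cycleOf_of_mem_cycles hC hiC, ← eq_cycleOf_of_mem_cycles hD hiD]

theorem cycleOf_eq_singleton {w : GW m n} {v : Fin n} (h : w.perm v = v) :
    w.cycleOf v = {v} := by
  ext x
  simp only [mem_cycleOf, Finset.mem_singleton]
  constructor
  · intro hx
    exact (hx.eq_of_left h).symm
  · rintro rfl
    exact Equiv.Perm.SameCycle.refl _ _

theorem perm_apply_mem_cycleOf (w : GW m n) (i : Fin n) : w.perm i ∈ w.cycleOf i :=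
  mem_cycleOf.2 ⟨1, by simp⟩

theorem cycWt_singleton (w : GW m n) (v : Fin n) : cycWt w {v} = w.wt v := by
  simp [cycWt]

/-! ### Core same-cycle lemmas for multiplication by a transposition -/

private theorem pow_apply_mod_period (σ : Equiv.Perm (Fin n)) (j : Fin n) (k : ℕ)
    (hk : (σ ^ k) j = j) (s : ℕ) : (σ ^ s) j = (σ ^ (s % k)) j := by
  have h1 : ∀ q : ℕ, ((σ ^ k) ^ q) j = j := by
    intro q
    induction q with
    | zero => simp
    | succ q ih => rw [pow_succ', Equiv.Perm.mul_apply, ih, hk]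
  conv_lhs => rw [← Nat.mod_add_div s k]
  rw [pow_add, pow_mul, Equiv.Perm.mul_apply, h1]

private theorem sameCycle_of_nat_pow {σ : Equiv.Perm (Fin n)} {x y : Fin n} {k : ℕ}
    (h : (σ ^ k) x = y) : σ.SameCycle x y := ⟨k, by rw [zpow_natCast, h]⟩

theorem sc_swap_mul_aux {τ : Equiv.Perm (Fin n)} {i j : Fin n} (hij : i ≠ j)
    (hnc : ¬ τ.SameCycle i j) : (Equiv.swap i j * τ).SameCycle j i := by
  classical
  have hex : ∃ k, 0 < k ∧ (τ ^ k) j = j :=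
    ⟨orderOf τ, orderOf_pos τ, by rw [pow_orderOf_eq_one]; rfl⟩
  set k₀ := Nat.find hex with hk₀def
  obtain ⟨hk₀pos, hk₀⟩ : 0 < k₀ ∧ (τ ^ k₀) j = j := Nat.find_spec hex
  have hmin : ∀ t, t < k₀ → 0 < t → (τ ^ t) j ≠ j := by
    intro t ht htpos hcon
    exact Nat.find_min hex ht ⟨htpos, hcon⟩
  have hne_i : ∀ t : ℕ, (τ ^ t) j ≠ i := by
    intro t ht
    exact hnc (sameCycle_of_nat_pow ht).symm
  have key : ∀ t, t < k₀ → ((Equiv.swap i j * τ) ^ t) j = (τ ^ t) j := by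
    intro t
    induction t with
    | zero => intro _; simp
    | succ t ih =>
      intro h
      have ht : t < k₀ := Nat.lt_of_succ_lt h
      rw [pow_succ', Equiv.Perm.mul_apply, ih ht, Equiv.Perm.mul_apply]
      rw [show τ ((τ ^ t) j) = (τ ^ (t+1)) j by rw [pow_succ', Equiv.Perm.mul_apply]]
      exact Equiv.swap_apply_of_ne_of_ne (hne_i (t+1)) (hmin (t+1) h (Nat.succ_pos t))
  refine sameCycle_of_nat_pow (k := k₀) ?_
  obtain ⟨r, hr⟩ : ∃ r, k₀ = r + 1 := ⟨k₀ - 1, (Nat.succ_pred_eq_of_pos hk₀pos).symm⟩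
  rw [hr, pow_succ', Equiv.Perm.mul_apply, key _ (by omega), Equiv.Perm.mul_apply]
  rw [show τ ((τ ^ r) j) = (τ ^ k₀) j by rw [hr, pow_succ', Equiv.Perm.mul_apply]]
  rw [hk₀]
  exact Equiv.swap_apply_right i j

theorem sc_swap_mul_iff {τ : Equiv.Perm (Fin n)} {i j : Fin n} (hij : i ≠ j)
    (hnc : ¬ τ.SameCycle i j) (x y : Fin n) :
    (Equiv.swap i j * τ).SameCycle x y ↔
      τ.SameCycle x y ∨ (τ.SameCycle x i ∧ τ.SameCycle j y) ∨
        (τ.SameCycle x j ∧ τ.SameCycle i y) := by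
  set σ := Equiv.swap i j * τ with hσdef
  have hji : σ.SameCycle j i := sc_swap_mul_aux hij hnc
  have hτσ : ∀ z, τ z = Equiv.swap i j (σ z) := by
    intro z
    rw [hσdef, Equiv.Perm.mul_apply, Equiv.swap_apply_self]
  have hστ : ∀ z, σ z = Equiv.swap i j (τ z) := by
    intro z
    rw [hσdef, Equiv.Perm.mul_apply]
  have hstepτ : ∀ z : Fin n, τ.SameCycle z (τ z) := fun z => ⟨1, by simp⟩
  have hstepσ : ∀ z : Fin n, σ.SameCycle z (σ z) := fun z => ⟨1, by simp⟩
  have mono : ∀ x y, τ.SameCycle x y → σ.SameCycle x y := by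
    intro x y h
    obtain ⟨k, -, rfl⟩ := h.exists_pow_eq'
    clear h
    induction k with
    | zero => exact ⟨0, by simp⟩
    | succ k ih =>
      rw [pow_succ', Equiv.Perm.mul_apply]
      have ih' : σ.SameCycle x ((τ ^ k) x) := ih
      set z := (τ ^ k) x with hz
      by_cases h1 : σ z = i
      · have : τ z = j := by rw [hτσ z, h1, Equiv.swap_apply_left]
        rw [this]
        have hxz : σ.SameCycle x (σ z) := ih'.trans (hstepσ z)
        rw [h1] at hxz
        exact hxz.trans hji.symm
      · by_cases h2 : σ z = j
        · have : τ z = i := by rw [hτσ z, h2, Equiv.swap_apply_right]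
          rw [this]
          have hxz : σ.SameCycle x (σ z) := ih'.trans (hstepσ z)
          rw [h2] at hxz
          exact hxz.trans hji
        · have : τ z = σ z := by rw [hτσ z, Equiv.swap_apply_of_ne_of_ne h1 h2]
          rw [this]
          exact ih'.trans (hstepσ z)
  constructor
  · intro h
    obtain ⟨k, -, rfl⟩ := h.exists_pow_eq'
    clear h
    induction k with
    | zero => exact Or.inl ⟨0, by simp⟩
    | succ k ih =>
      rw [pow_succ', Equiv.Perm.mul_apply]
      set z := (σ ^ k) x with hz
      by_cases h1 : τ z = i
      · have hσz : σ z = j := by rw [hστ z, h1, Equiv.swap_apply_left]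
        rw [hσz]
        rcases ih with h' | ⟨ha, hb⟩ | ⟨ha, hb⟩
        · have : τ.SameCycle x i := by
            have := h'.trans (hstepτ z)
            rwa [h1] at this
          exact Or.inr (Or.inl ⟨this, Equiv.Perm.SameCycle.refl _ _⟩)
        · exfalso
          have : τ.SameCycle j i := by
            have := hb.trans (hstepτ z)
            rwa [h1] at this
          exact hnc this.symm
        · exact Or.inl ha
      · by_cases h2 : τ z = j
        · have hσz : σ z = i := by rw [hστ z, h2, Equiv.swap_apply_right]
          rw [hσz]
          rcases ih with h' | ⟨ha, hb⟩ | ⟨ha, hb⟩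
          · have : τ.SameCycle x j := by
              have := h'.trans (hstepτ z)
              rwa [h2] at this
            exact Or.inr (Or.inr ⟨this, Equiv.Perm.SameCycle.refl _ _⟩)
          · exact Or.inl ha
          · exfalso
            have : τ.SameCycle i j := by
              have := hb.trans (hstepτ z)
              rwa [h2] at this
            exact hnc this
        · have hσz : σ z = τ z := by rw [hστ z, Equiv.swap_apply_of_ne_of_ne h1 h2]
          rw [hσz]
          rcases ih with h' | ⟨ha, hb⟩ | ⟨ha, hb⟩
          · exact Or.inl (h'.trans (hstepτ z))
          · exact Or.inr (Or.inl ⟨ha, hb.trans (hstepτ z)⟩)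
          · exact Or.inr (Or.inr ⟨ha, hb.trans (hstepτ z)⟩)
  · rintro (h | ⟨ha, hb⟩ | ⟨ha, hb⟩)
    · exact mono _ _ h
    · exact ((mono _ _ ha).trans hji.symm).trans (mono _ _ hb)
    · exact ((mono _ _ ha).trans hji).trans (mono _ _ hb)

theorem sc_split_not {σp : Equiv.Perm (Fin n)} {i j : Fin n} (hij : i ≠ j)
    (hsc : σp.SameCycle i j) : ¬ (Equiv.swap i j * σp).SameCycle i j := by
  classical
  set τ := Equiv.swap i j * σp with hτdef
  intro hτsc
  have hστ : ∀ z, τ z = Equiv.swap i j (σp z) := fun z => by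
    rw [hτdef, Equiv.Perm.mul_apply]
  have hex : ∃ k, 0 < k ∧ ((σp ^ k) j = i ∨ (σp ^ k) j = j) := by
    obtain ⟨s, hs1, -, hs⟩ := (hsc.symm).exists_pow_eq''
    exact ⟨s, hs1, Or.inl hs⟩
  set k₁ := Nat.find hex with hk₁def
  obtain ⟨hk₁pos, hk₁⟩ : 0 < k₁ ∧ ((σp ^ k₁) j = i ∨ (σp ^ k₁) j = j) := Nat.find_spec hex
  have hmin : ∀ t, t < k₁ → 0 < t → (σp ^ t) j ≠ i ∧ (σp ^ t) j ≠ j := by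
    intro t ht htpos
    constructor
    · intro hcon; exact Nat.find_min hex ht ⟨htpos, Or.inl hcon⟩
    · intro hcon; exact Nat.find_min hex ht ⟨htpos, Or.inr hcon⟩
  have key : ∀ t, t < k₁ → (τ ^ t) j = (σp ^ t) j := by
    intro t
    induction t with
    | zero => intro _; simp
    | succ t ih =>
      intro h
      have ht : t < k₁ := Nat.lt_of_succ_lt h
      rw [pow_succ', Equiv.Perm.mul_apply, ih ht, hστ,
        show σp ((σp ^ t) j) = (σp ^ (t+1)) j by rw [pow_succ', Equiv.Perm.mul_apply]]
      obtain ⟨h1, h2⟩ := hmin (t+1) h (Nat.succ_pos t)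
      exact Equiv.swap_apply_of_ne_of_ne h1 h2
  rcases hk₁ with hki | hkj
  · -- (σp^k₁) j = i : then τ^k₁ j = j and the τ-orbit of j avoids i
    have hτk₁ : (τ ^ k₁) j = j := by
      obtain ⟨r, hr⟩ : ∃ r, k₁ = r + 1 := ⟨k₁ - 1, (Nat.succ_pred_eq_of_pos hk₁pos).symm⟩
      rw [hr, pow_succ', Equiv.Perm.mul_apply, key _ (by omega), hστ,
        show σp ((σp ^ r) j) = (σp ^ k₁) j by rw [hr, pow_succ', Equiv.Perm.mul_apply],
        hki, Equiv.swap_apply_left]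
    have horb : ∀ s : ℕ, (τ ^ s) j ≠ i := by
      intro s
      rw [pow_apply_mod_period τ j k₁ hτk₁ s]
      have hlt : s % k₁ < k₁ := Nat.mod_lt s hk₁pos
      rw [key _ hlt]
      rcases Nat.eq_zero_or_pos (s % k₁) with h0 | hpos
      · rw [h0]; simpa using hij.symm
      · exact (hmin _ hlt hpos).1
    obtain ⟨s, -, hs⟩ := (hτsc.symm).exists_pow_eq'
    exact horb s hs
  · -- (σp^k₁) j = j : then the σp-orbit of j avoids i, contradicting hsc
    have horb : ∀ s : ℕ, (σp ^ s) j ≠ i := by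
      intro s
      rw [pow_apply_mod_period σp j k₁ hkj s]
      have hlt : s % k₁ < k₁ := Nat.mod_lt s hk₁pos
      rcases Nat.eq_zero_or_pos (s % k₁) with h0 | hpos
      · rw [h0]; simpa using hij.symm
      · exact (hmin _ hlt hpos).1
    obtain ⟨s, -, hs⟩ := (hsc.symm).exists_pow_eq'
    exact horb s hs


/-! ### Explicit reflections and weight multisets -/

def mkTrans (i j : Fin n) (c : ZMod m) : GW m n :=
  ⟨Equiv.swap i j, fun x => if x = i then c else if x = j then -c else 0⟩

def mkDiag (v : Fin n) (d : ZMod m) : GW m n :=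
  ⟨1, fun x => if x = v then d else 0⟩

@[simp] theorem mkTrans_perm (i j : Fin n) (c : ZMod m) :
    (mkTrans i j c).perm = Equiv.swap i j := rfl

@[simp] theorem mkDiag_perm (v : Fin n) (d : ZMod m) : (mkDiag v d).perm = 1 := rfl

theorem mkTrans_wt (i j : Fin n) (c : ZMod m) (x : Fin n) :
    (mkTrans i j c).wt x = if x = i then c else if x = j then -c else 0 := rfl

theorem mkDiag_wt (v : Fin n) (d : ZMod m) (x : Fin n) :
    (mkDiag v d).wt x = if x = v then d else 0 := rfl

theorem mkTrans_mul_self {i j : Fin n} (hij : i ≠ j) (c : ZMod m) :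
    mkTrans i j c * mkTrans i j c = 1 := by
  ext x
  · simp [Equiv.swap_apply_self]
  · simp only [mul_wt, one_wt, mkTrans_perm, Equiv.swap_inv, mkTrans_wt]
    rcases eq_or_ne x i with rfl | h1
    · simp [Equiv.swap_apply_left, hij, Ne.symm hij]
    · rcases eq_or_ne x j with rfl | h2
      · simp [Equiv.swap_apply_right, h1, Ne.symm h1, hij]
      · simp [Equiv.swap_apply_of_ne_of_ne h1 h2, h1, h2]

theorem mkTrans_cancel {i j : Fin n} (hij : i ≠ j) (c : ZMod m) (y : GW m n) :
    mkTrans i j c * (mkTrans i j c * y) = y := by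
  rw [← mul_assoc, mkTrans_mul_self hij, one_mul]

theorem mkDiag_inv (v : Fin n) (d : ZMod m) : (mkDiag v d)⁻¹ = mkDiag v (-d) := by
  ext x
  · simp
  · show -(mkDiag v d).wt ((1 : Equiv.Perm (Fin n)) x) = (mkDiag v (-d)).wt x
    rw [Equiv.Perm.one_apply, mkDiag_wt, mkDiag_wt, apply_ite Neg.neg, neg_zero]

def Wm (w : GW m n) : Multiset (ZMod m) := (cycles w).val.map (cycWt w)

def NZm (w : GW m n) : Multiset (ZMod m) := (Wm w).filter (· ≠ 0)

theorem c0_eq_count (w : GW m n) : c0 w = (Wm w).count 0 := by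
  rw [c0, Wm, Multiset.count_map, Finset.card_def, Finset.filter_val]
  congr 1
  exact Multiset.filter_congr fun C _ => by constructor <;> (intro h; exact h.symm)

theorem card_Wm (w : GW m n) : (Wm w).card = numCycles w := by
  rw [Wm, Multiset.card_map, numCycles, Finset.card_def]

theorem numCycles_le (w : GW m n) : numCycles w ≤ n := by
  calc numCycles w ≤ Finset.univ.card := Finset.card_image_le
  _ = n := by simp

/-! ### Surgery lemmas: effect of one reflection on the cycle-weight multiset -/

theorem surgery {y : GW m n} {i j : Fin n} (hij : i ≠ j) (c : ZMod m)
    (hnc : ¬ y.perm.SameCycle i j) :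
    ∃ M : Multiset (ZMod m),
      Wm y = cycWt y (y.cycleOf i) ::ₘ cycWt y (y.cycleOf j) ::ₘ M ∧
      Wm (mkTrans i j c * y) =
        cycWt (mkTrans i j c * y) ((mkTrans i j c * y).cycleOf i) ::ₘ M ∧
      cycWt (mkTrans i j c * y) ((mkTrans i j c * y).cycleOf i) =
        cycWt y (y.cycleOf i) + cycWt y (y.cycleOf j) := by
  classical
  set w' := mkTrans i j c * y with hw'
  have hperm : w'.perm = Equiv.swap i j * y.perm := rfl
  set C := y.cycleOf i with hCdef
  set D := y.cycleOf j with hDdef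
  have hiC : i ∈ C := self_mem_cycleOf y i
  have hjD : j ∈ D := self_mem_cycleOf y j
  have hCD : C ≠ D := by
    intro h
    apply hnc
    have hjC : j ∈ C := by rw [h]; exact hjD
    exact mem_cycleOf.1 hjC
  have hdisj : ∀ x, x ∈ C → x ∈ D → False := fun x hxC hxD =>
    hnc ((mem_cycleOf.1 hxC).trans (mem_cycleOf.1 hxD).symm)
  have hiff : ∀ x z, w'.perm.SameCycle x z ↔
      y.perm.SameCycle x z ∨ (y.perm.SameCycle x i ∧ y.perm.SameCycle j z) ∨
        (y.perm.SameCycle x j ∧ y.perm.SameCycle i z) := by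
    intro x z; rw [hperm]; exact sc_swap_mul_iff hij hnc x z
  have hcycE : ∀ x, x ∈ C ∪ D → w'.cycleOf x = C ∪ D := by
    intro x hx
    ext z
    simp only [mem_cycleOf, Finset.mem_union, hCdef, hDdef] at hx ⊢
    rw [hiff]
    rcases hx with hxC | hxD
    · constructor
      · rintro (h | ⟨h1, h2⟩ | ⟨h1, h2⟩)
        · exact Or.inl (hxC.trans h)
        · exact Or.inr h2
        · exact absurd (hxC.trans h1) hnc
      · rintro (h | h)
        · exact Or.inl (hxC.symm.trans h)
        · exact Or.inr (Or.inl ⟨hxC.symm, h⟩)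
    · constructor
      · rintro (h | ⟨h1, h2⟩ | ⟨h1, h2⟩)
        · exact Or.inr (hxD.trans h)
        · exact absurd (hxD.trans h1).symm hnc
        · exact Or.inl h2
      · rintro (h | h)
        · exact Or.inr (Or.inr ⟨hxD.symm, h⟩)
        · exact Or.inl (hxD.symm.trans h)
  have hcycO : ∀ x, x ∉ C ∪ D → w'.cycleOf x = y.cycleOf x := by
    intro x hx
    have hxC : ¬ y.perm.SameCycle i x := fun h =>
      hx (Finset.mem_union_left _ (mem_cycleOf.2 h))
    have hxD : ¬ y.perm.SameCycle j x := fun h =>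
      hx (Finset.mem_union_right _ (mem_cycleOf.2 h))
    ext z
    simp only [mem_cycleOf]
    rw [hiff]
    constructor
    · rintro (h | ⟨h1, h2⟩ | ⟨h1, h2⟩)
      · exact h
      · exact absurd h1.symm hxC
      · exact absurd h1.symm hxD
    · exact fun h => Or.inl h
  have hwt_off : ∀ x, x ≠ i → x ≠ j → w'.wt x = y.wt x := by
    intro x h1 h2
    rw [hw', mul_wt, mkTrans_perm, Equiv.swap_inv, mkTrans_wt, if_neg h1, if_neg h2,
      Equiv.swap_apply_of_ne_of_ne h1 h2, zero_add]
  have hsumE : cycWt w' (C ∪ D) = cycWt y C + cycWt y D := by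
    have hswapE : ∀ x, x ∈ C ∪ D → Equiv.swap i j x ∈ C ∪ D := by
      intro x hx
      rcases eq_or_ne x i with rfl | h1
      · rw [Equiv.swap_apply_left]; exact Finset.mem_union_right _ hjD
      · rcases eq_or_ne x j with rfl | h2
        · rw [Equiv.swap_apply_right]; exact Finset.mem_union_left _ hiC
        · rwa [Equiv.swap_apply_of_ne_of_ne h1 h2]
    have h2 : ∑ x ∈ C ∪ D, y.wt (Equiv.swap i j x) = ∑ x ∈ C ∪ D, y.wt x := by
      apply Finset.sum_equiv (Equiv.swap i j)
      · intro x
        constructor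
        · exact hswapE x
        · intro hx
          have := hswapE _ hx
          rwa [Equiv.swap_apply_self] at this
      · intro x _; rfl
    have h1 : ∑ x ∈ C ∪ D, (mkTrans i j c : GW m n).wt x = 0 := by
      have hsplit : ∀ x : Fin n, (mkTrans i j c : GW m n).wt x =
          (if x = i then c else 0) + (if x = j then -c else 0) := by
        intro x
        rw [mkTrans_wt]
        rcases eq_or_ne x i with rfl | h1
        · rw [if_pos rfl, if_pos rfl, if_neg hij, add_zero]
        · rw [if_neg h1, if_neg h1, zero_add]
      rw [Finset.sum_congr rfl fun x _ => hsplit x, Finset.sum_add_distrib,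
        Finset.sum_ite_eq' (C ∪ D) i (fun _ => c),
        Finset.sum_ite_eq' (C ∪ D) j (fun _ => -c),
        if_pos (Finset.mem_union_left _ hiC), if_pos (Finset.mem_union_right _ hjD),
        add_neg_cancel]
    have hwt' : ∀ x : Fin n, w'.wt x =
        (mkTrans i j c : GW m n).wt x + y.wt (Equiv.swap i j x) := by
      intro x; rw [hw', mul_wt, mkTrans_perm, Equiv.swap_inv]
    calc cycWt w' (C ∪ D) = ∑ x ∈ C ∪ D, ((mkTrans i j c : GW m n).wt x
          + y.wt (Equiv.swap i j x)) := Finset.sum_congr rfl fun x _ => hwt' x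
      _ = (∑ x ∈ C ∪ D, (mkTrans i j c : GW m n).wt x)
          + ∑ x ∈ C ∪ D, y.wt (Equiv.swap i j x) := Finset.sum_add_distrib
      _ = ∑ x ∈ C ∪ D, y.wt x := by rw [h1, h2, zero_add]
      _ = cycWt y C + cycWt y D := by
          rw [cycWt, cycWt, ← Finset.sum_union]
          rw [Finset.disjoint_left]
          exact fun {a} ha hb => hdisj a ha hb
  have hEnotin : C ∪ D ∉ cycles y := by
    intro h
    obtain ⟨z, hz⟩ := mem_cycles_iff.1 h
    have hi' : i ∈ y.cycleOf z := hz ▸ Finset.mem_union_left _ hiC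
    have hj' : j ∈ y.cycleOf z := hz ▸ Finset.mem_union_right _ hjD
    exact hnc ((mem_cycleOf.1 hi').symm.trans (mem_cycleOf.1 hj'))
  have hcycles' : cycles w' = insert (C ∪ D) (((cycles y).erase C).erase D) := by
    ext F
    simp only [Finset.mem_insert, Finset.mem_erase]
    constructor
    · intro hF
      obtain ⟨x, rfl⟩ := mem_cycles_iff.1 hF
      by_cases hx : x ∈ C ∪ D
      · exact Or.inl (hcycE x hx)
      · right
        rw [hcycO x hx]
        refine ⟨?_, ?_, cycleOf_mem_cycles y x⟩
        · intro h
          exact hx (Finset.mem_union_right _ (h ▸ self_mem_cycleOf y x))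
        · intro h
          exact hx (Finset.mem_union_left _ (h ▸ self_mem_cycleOf y x))
    · rintro (rfl | ⟨hFD, hFC, hF⟩)
      · rw [← hcycE i (Finset.mem_union_left _ hiC)]
        exact cycleOf_mem_cycles w' i
      · obtain ⟨x, rfl⟩ := mem_cycles_iff.1 hF
        have hx : x ∉ C ∪ D := by
          intro hx
          rcases Finset.mem_union.1 hx with h | h
          · exact hFC (cycleOf_eq_of_mem h)
          · exact hFD (cycleOf_eq_of_mem h)
        rw [← hcycO x hx]
        exact cycleOf_mem_cycles w' x
  obtain ⟨R, hR⟩ : ∃ R, (cycles y).val = C ::ₘ D ::ₘ R := by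
    obtain ⟨s₁, hs₁⟩ := Multiset.exists_cons_of_mem
      (show C ∈ (cycles y).val from cycleOf_mem_cycles y i)
    have hD1 : D ∈ s₁ := by
      have hD2 : D ∈ (cycles y).val := cycleOf_mem_cycles y j
      rw [hs₁, Multiset.mem_cons] at hD2
      exact hD2.resolve_left (Ne.symm hCD)
    obtain ⟨R, hR⟩ := Multiset.exists_cons_of_mem hD1
    exact ⟨R, by rw [hs₁, hR]⟩
  have hval' : (cycles w').val = (C ∪ D) ::ₘ R := by
    rw [hcycles', Finset.insert_val_of_notMem (by
      intro h
      exact hEnotin (Finset.mem_of_mem_erase (Finset.mem_of_mem_erase h)))]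
    rw [Finset.erase_val, Finset.erase_val, hR, Multiset.erase_cons_head,
      Multiset.erase_cons_head]
  have hnodup : ((cycles y).val).Nodup := (cycles y).nodup
  rw [hR] at hnodup
  have hRfacts : ∀ F ∈ R, F ≠ C ∧ F ≠ D ∧ F ∈ cycles y := by
    intro F hF
    obtain ⟨h1, h2⟩ := Multiset.nodup_cons.1 hnodup
    obtain ⟨h3, h4⟩ := Multiset.nodup_cons.1 h2
    refine ⟨fun h => h1 (h ▸ Multiset.mem_cons_of_mem hF), fun h => h3 (h ▸ hF), ?_⟩
    show F ∈ (cycles y).val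
    rw [hR]
    exact Multiset.mem_cons_of_mem (Multiset.mem_cons_of_mem hF)
  have hwtR : ∀ F ∈ R, cycWt w' F = cycWt y F := by
    intro F hF
    obtain ⟨h1, h2, h3⟩ := hRfacts F hF
    apply Finset.sum_congr rfl
    intro x hx
    apply hwt_off
    · intro hxi
      exact h1 (cycles_eq_of_mem_mem h3 (cycleOf_mem_cycles y i) (hxi ▸ hx)
        (self_mem_cycleOf y i))
    · intro hxj
      exact h2 (cycles_eq_of_mem_mem h3 (cycleOf_mem_cycles y j) (hxj ▸ hx)
        (self_mem_cycleOf y j))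
  have hcycEi : w'.cycleOf i = C ∪ D := hcycE i (Finset.mem_union_left _ hiC)
  refine ⟨R.map (cycWt y), ?_, ?_, ?_⟩
  · rw [Wm, hR, Multiset.map_cons, Multiset.map_cons]
  · rw [Wm, hval', Multiset.map_cons, hcycEi, Multiset.map_congr rfl hwtR]
  · rw [hcycEi]; exact hsumE


theorem diag_surgery (y : GW m n) (v : Fin n) (d : ZMod m) :
    ∃ M : Multiset (ZMod m),
      Wm y = cycWt y (y.cycleOf v) ::ₘ M ∧
      Wm (mkDiag v d * y) = (cycWt y (y.cycleOf v) + d) ::ₘ M := by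
  classical
  set w' := mkDiag v d * y with hw'
  have hperm : w'.perm = y.perm := by
    rw [hw', mul_perm, mkDiag_perm, one_mul]
  have hcyc : ∀ x, w'.cycleOf x = y.cycleOf x := by
    intro x
    unfold cycleOf
    rw [hperm]
  have hcycles : cycles w' = cycles y := by
    unfold cycles
    exact Finset.image_congr fun x _ => hcyc x
  have hwt : ∀ x, w'.wt x = (if x = v then d else 0) + y.wt x := by
    intro x
    rw [hw', mul_wt, mkDiag_perm, mkDiag_wt, inv_one, Equiv.Perm.one_apply]
  have hwtF : ∀ F : Finset (Fin n), v ∉ F → cycWt w' F = cycWt y F := by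
    intro F hvF
    apply Finset.sum_congr rfl
    intro x hx
    rw [hwt x, if_neg, zero_add]
    exact fun h => hvF (h ▸ hx)
  have hwtC : cycWt w' (y.cycleOf v) = cycWt y (y.cycleOf v) + d := by
    rw [cycWt, cycWt, Finset.sum_congr rfl fun x _ => hwt x, Finset.sum_add_distrib,
      Finset.sum_ite_eq' _ v (fun _ => d), if_pos (self_mem_cycleOf y v), add_comm]
  obtain ⟨R, hR⟩ := Multiset.exists_cons_of_mem
    (show y.cycleOf v ∈ (cycles y).val from cycleOf_mem_cycles y v)
  have hnodup : ((cycles y).val).Nodup := (cycles y).nodup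
  rw [hR] at hnodup
  have hRv : ∀ F ∈ R, v ∉ F := by
    intro F hF hvF
    have hFmem : F ∈ cycles y := by
      show F ∈ (cycles y).val
      rw [hR]
      exact Multiset.mem_cons_of_mem hF
    have hFC : F = y.cycleOf v :=
      cycles_eq_of_mem_mem hFmem (cycleOf_mem_cycles y v) hvF (self_mem_cycleOf y v)
    exact (Multiset.nodup_cons.1 hnodup).1 (hFC ▸ hF)
  refine ⟨R.map (cycWt y), ?_, ?_⟩
  · rw [Wm, hR, Multiset.map_cons]
  · rw [Wm, hcycles, hR, Multiset.map_cons, hwtC]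
    congr 1
    exact Multiset.map_congr rfl fun F hF => hwtF F (hRv F hF)

/-! ### Partition facts -/

theorem cycles_biUnion (w : GW m n) : (cycles w).biUnion id = Finset.univ := by
  ext x
  simp only [Finset.mem_biUnion, id, Finset.mem_univ, iff_true]
  exact ⟨w.cycleOf x, cycleOf_mem_cycles w x, self_mem_cycleOf w x⟩

theorem sum_cycles {β : Type} [AddCommMonoid β] (w : GW m n) (g : Fin n → β) :
    ∑ C ∈ cycles w, ∑ x ∈ C, g x = ∑ x, g x := by
  have hdisj : (↑(cycles w) : Set (Finset (Fin n))).PairwiseDisjoint id := by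
    intro C hC D hD hCD
    simp only [Function.onFun, id]
    rw [Finset.disjoint_left]
    intro a haC haD
    exact hCD (cycles_eq_of_mem_mem (Finset.mem_coe.1 hC) (Finset.mem_coe.1 hD) haC haD)
  calc ∑ C ∈ cycles w, ∑ x ∈ C, g x = ∑ x ∈ (cycles w).biUnion id, g x :=
        (Finset.sum_biUnion hdisj).symm
    _ = ∑ x, g x := by rw [cycles_biUnion]

theorem sum_Wm (w : GW m n) : (Wm w).sum = wtTot w := by
  have h : ∑ C ∈ cycles w, cycWt w C = wtTot w := by
    rw [wtTot, ← sum_cycles w w.wt]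
    rfl
  exact h

theorem sum_card_cycles (w : GW m n) : ∑ C ∈ cycles w, C.card = n := by
  have h := sum_cycles w (fun _ => (1 : ℕ))
  have h2 : ∀ C ∈ cycles w, ∑ _x ∈ C, (1 : ℕ) = C.card := fun C _ => by
    rw [Finset.sum_const, smul_eq_mul, mul_one]
  rw [Finset.sum_congr rfl h2] at h
  simpa using h

theorem cycleOf_card_one {w : GW m n} {x : Fin n} (h : (w.cycleOf x).card = 1) :
    w.cycleOf x = {x} := by
  obtain ⟨z, hz⟩ := Finset.card_eq_one.1 h
  have hx := self_mem_cycleOf w x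
  rw [hz, Finset.mem_singleton] at hx
  rw [hz, hx]

theorem c0_le_numCycles (w : GW m n) : c0 w ≤ numCycles w := Finset.card_filter_le _ _

theorem eq_one_of_c0 {w : GW m n} (h : c0 w = n) : w = 1 := by
  have h1 : c0 w ≤ numCycles w := c0_le_numCycles w
  have h2 := numCycles_le w
  have h3 : numCycles w = n := le_antisymm h2 (by omega)
  have hcard : ∀ C ∈ cycles w, C.card = 1 := by
    by_contra hcon
    push_neg at hcon
    obtain ⟨C₀, hC₀, hne⟩ := hcon
    have h4 : 1 ≤ C₀.card := Finset.card_pos.2 (cycles_nonempty hC₀)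
    have h5 : ∑ C ∈ cycles w, (1 : ℕ) < ∑ C ∈ cycles w, C.card :=
      Finset.sum_lt_sum (fun C hC => Finset.card_pos.2 (cycles_nonempty hC))
        ⟨C₀, hC₀, by omega⟩
    rw [sum_card_cycles, Finset.sum_const, smul_eq_mul, mul_one] at h5
    rw [numCycles] at h3
    omega
  have hallz : ∀ C ∈ cycles w, cycWt w C = 0 := by
    have hsub : (cycles w).filter (fun C => cycWt w C = 0) = cycles w := by
      apply Finset.eq_of_subset_of_card_le (Finset.filter_subset _ _)
      have e1 : ((cycles w).filter fun C => cycWt w C = 0).card = c0 w := rfl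
      have e2 : (cycles w).card = numCycles w := rfl
      omega
    intro C hC
    rw [← hsub] at hC
    exact (Finset.mem_filter.1 hC).2
  have hsing : ∀ x : Fin n, w.cycleOf x = {x} := fun x =>
    cycleOf_card_one (hcard _ (cycleOf_mem_cycles w x))
  ext x
  · have hmem := perm_apply_mem_cycleOf w x
    rw [hsing x, Finset.mem_singleton] at hmem
    simp [hmem]
  · have hz := hallz _ (cycleOf_mem_cycles w x)
    rw [hsing x, cycWt_singleton] at hz
    simpa using hz

/-! ### Total weight and membership -/

theorem wtTot_mul (x y : GW m n) : wtTot (x * y) = wtTot x + wtTot y := by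
  simp only [wtTot, mul_wt]
  rw [Finset.sum_add_distrib]
  congr 1
  exact Equiv.sum_comp x.perm⁻¹ y.wt

theorem wtTot_mkTrans {i j : Fin n} (hij : i ≠ j) (c : ZMod m) :
    wtTot (mkTrans i j c) = 0 := by
  rw [wtTot]
  have hsplit : ∀ x : Fin n, (mkTrans i j c).wt x =
      (if x = i then c else 0) + (if x = j then -c else 0) := by
    intro x
    rw [mkTrans_wt]
    rcases eq_or_ne x i with rfl | h1
    · rw [if_pos rfl, if_pos rfl, if_neg hij, add_zero]
    · rw [if_neg h1, if_neg h1, zero_add]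
  rw [Finset.sum_congr rfl fun x _ => hsplit x, Finset.sum_add_distrib,
    Finset.sum_ite_eq' _ i (fun _ => c), Finset.sum_ite_eq' _ j (fun _ => -c),
    if_pos (Finset.mem_univ i), if_pos (Finset.mem_univ j), add_neg_cancel]

theorem wtTot_mkDiag (v : Fin n) (d : ZMod m) : wtTot (mkDiag v d) = d := by
  rw [wtTot]
  simp only [mkDiag_wt]
  rw [Finset.sum_ite_eq' _ v (fun _ => d), if_pos (Finset.mem_univ v)]

theorem Gmem_mul {p : ℕ} {hpm : p ∣ m} {x y : GW m n} (hx : Gmem p hpm x)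
    (hy : Gmem p hpm y) : Gmem p hpm (x * y) := by
  unfold Gmem at *
  rw [wtTot_mul, RingHom.map_add, hx, hy, add_zero]

theorem Gmem_mkTrans {p : ℕ} {hpm : p ∣ m} {i j : Fin n} (hij : i ≠ j) (c : ZMod m) :
    Gmem p hpm (mkTrans i j c) := by
  unfold Gmem
  rw [wtTot_mkTrans hij, RingHom.map_zero]

theorem Gmem_mkDiag {p : ℕ} {hpm : p ∣ m} {v : Fin n} {d : ZMod m}
    (hd : ZMod.castHom hpm (ZMod p) d = 0) : Gmem p hpm (mkDiag v d) := by
  unfold Gmem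
  rw [wtTot_mkDiag]
  exact hd

theorem sum_NZm (w : GW m n) : (NZm w).sum = wtTot w := by
  rw [← sum_Wm w, NZm]
  conv_rhs => rw [← Multiset.filter_add_not (fun a => a ≠ 0) (Wm w)]
  rw [Multiset.sum_add]
  have hz : (Multiset.filter (fun a => ¬ a ≠ 0) (Wm w)).sum = 0 :=
    Multiset.sum_eq_zero fun x hx => by simpa using (Multiset.mem_filter.1 hx).2
  rw [hz, add_zero]


/-! ### Classification of reflections -/

theorem count_map_zero {α : Type} (s : Multiset α) (f : α → ZMod m) :
    (Multiset.map f s).count 0 = (Multiset.filter (fun x => f x = 0) s).card := by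
  rw [Multiset.count_map]
  congr 1
  exact Multiset.filter_congr fun C _ => by constructor <;> (intro h; exact h.symm)

theorem refl_classify {p : ℕ} {hpm : p ∣ m} {t : GW m n} (ht : IsRefl p hpm t) :
    (∃ (v : Fin n) (d : ZMod m), d ≠ 0 ∧ ZMod.castHom hpm (ZMod p) d = 0 ∧ t = mkDiag v d) ∨
    (∃ (i j : Fin n) (c : ZMod m), i ≠ j ∧ t = mkTrans i j c) := by
  classical
  obtain ⟨hG, hcdf⟩ := ht
  have h1 : c0 t ≤ numCycles t := c0_le_numCycles t
  have h2 := numCycles_le t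
  have hc0 : c0 t + 1 = n := by
    rw [codimfix] at hcdf
    omega
  rcases eq_or_lt_of_le h2 with hk | hk
  · -- numCycles = n : diagonal type
    left
    have hcard : ∀ C ∈ cycles t, C.card = 1 := by
      by_contra hcon
      push_neg at hcon
      obtain ⟨C₀, hC₀, hne⟩ := hcon
      have h5 : ∑ C ∈ cycles t, (1 : ℕ) < ∑ C ∈ cycles t, C.card :=
        Finset.sum_lt_sum (fun C hC => Finset.card_pos.2 (cycles_nonempty hC))
          ⟨C₀, hC₀, by have := Finset.card_pos.2 (cycles_nonempty hC₀); omega⟩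
      rw [sum_card_cycles, Finset.sum_const, smul_eq_mul, mul_one] at h5
      have e2 : (cycles t).card = numCycles t := rfl
      omega
    have hsing : ∀ x : Fin n, t.cycleOf x = {x} := fun x =>
      cycleOf_card_one (hcard _ (cycleOf_mem_cycles t x))
    have hperm1 : t.perm = 1 := by
      apply Equiv.ext
      intro x
      have hmem := perm_apply_mem_cycleOf t x
      rw [hsing x, Finset.mem_singleton] at hmem
      simpa using hmem
    have hwt_cyc : ∀ x : Fin n, cycWt t (t.cycleOf x) = t.wt x := by
      intro x; rw [hsing x, cycWt_singleton]
    have hinj : Function.Injective (fun x => t.cycleOf x) := by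
      intro a b hab
      have hab' : ({a} : Finset (Fin n)) = {b} := by
        rw [← hsing a, ← hsing b]; exact hab
      exact Finset.singleton_injective hab'
    have hval : (cycles t).val = Multiset.map (fun x => t.cycleOf x) Finset.univ.val :=
      Finset.image_val_of_injOn hinj.injOn
    have hWm : Wm t = Multiset.map (fun x => t.wt x) Finset.univ.val := by
      rw [Wm, hval, Multiset.map_map]
      exact Multiset.map_congr rfl fun x _ => hwt_cyc x
    have hcnt : (Finset.univ.filter fun x : Fin n => t.wt x = 0).card = c0 t := by
      rw [c0_eq_count, hWm, count_map_zero, Finset.card_def, Finset.filter_val]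
    have hsumcard := Finset.card_filter_add_card_filter_not
      (s := (Finset.univ : Finset (Fin n))) (p := fun x => t.wt x = 0)
    rw [Finset.card_univ, Fintype.card_fin] at hsumcard
    have hfilt : (Finset.univ.filter fun x : Fin n => ¬ t.wt x = 0).card = 1 := by omega
    obtain ⟨v, hv⟩ := Finset.card_eq_one.1 hfilt
    have hvne : t.wt v ≠ 0 := by
      have hvmem : v ∈ Finset.univ.filter fun x : Fin n => ¬ t.wt x = 0 := by
        rw [hv]; exact Finset.mem_singleton_self v
      simpa using hvmem
    have hother : ∀ x, x ≠ v → t.wt x = 0 := by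
      intro x hx
      by_contra hxx
      have hxmem : x ∈ ({v} : Finset (Fin n)) := by
        rw [← hv]; simp [hxx]
      rw [Finset.mem_singleton] at hxmem
      exact hx hxmem
    refine ⟨v, t.wt v, hvne, ?_, ?_⟩
    · have htot : wtTot t = t.wt v := by
        rw [wtTot]
        exact Finset.sum_eq_single v (fun b _ hb => hother b hb)
          (fun h => absurd (Finset.mem_univ v) h)
      unfold Gmem at hG
      rwa [htot] at hG
    · ext x
      · simp [hperm1]
      · rw [mkDiag_wt]
        rcases eq_or_ne x v with rfl | hx
        · rw [if_pos rfl]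
        · rw [if_neg hx]; exact hother x hx
  · -- numCycles = n - 1 : transposition type
    right
    have hallz : ∀ C ∈ cycles t, cycWt t C = 0 := by
      have hsub : (cycles t).filter (fun C => cycWt t C = 0) = cycles t := by
        apply Finset.eq_of_subset_of_card_le (Finset.filter_subset _ _)
        have e1 : ((cycles t).filter fun C => cycWt t C = 0).card = c0 t := rfl
        have e2 : (cycles t).card = numCycles t := rfl
        omega
      intro C hC
      rw [← hsub] at hC
      exact (Finset.mem_filter.1 hC).2
    have hex : ∃ C₀ ∈ cycles t, 2 ≤ C₀.card := by
      by_contra hcon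
      push_neg at hcon
      have hall1 : ∀ C ∈ cycles t, C.card = 1 := by
        intro C hC
        have hp := Finset.card_pos.2 (cycles_nonempty hC)
        have hc := hcon C hC
        omega
      have hsum : ∑ C ∈ cycles t, C.card = numCycles t := by
        rw [Finset.sum_congr rfl hall1, Finset.sum_const, smul_eq_mul, mul_one]; rfl
      rw [sum_card_cycles] at hsum
      omega
    obtain ⟨C₀, hC₀, h2c⟩ := hex
    have hsplit : C₀.card + ∑ C ∈ (cycles t).erase C₀, C.card = ∑ C ∈ cycles t, C.card :=
      Finset.add_sum_erase (cycles t) (fun C : Finset (Fin n) => C.card) hC₀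
    have hbound : ∀ C ∈ (cycles t).erase C₀, 1 ≤ C.card := fun C hC =>
      Finset.card_pos.2 (cycles_nonempty (Finset.mem_of_mem_erase hC))
    have hsum_ge : ((cycles t).erase C₀).card ≤ ∑ C ∈ (cycles t).erase C₀, C.card := by
      calc ((cycles t).erase C₀).card = ∑ _C ∈ (cycles t).erase C₀, 1 := by
            rw [Finset.sum_const, smul_eq_mul, mul_one]
        _ ≤ _ := Finset.sum_le_sum hbound
    have hcerase : ((cycles t).erase C₀).card + 1 = numCycles t := by
      rw [Finset.card_erase_of_mem hC₀]
      have e2 : (cycles t).card = numCycles t := rfl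
      have e3 : 0 < (cycles t).card := Finset.card_pos.2 ⟨C₀, hC₀⟩
      omega
    have hn := sum_card_cycles t
    have hcard2 : C₀.card = 2 := by omega
    have hrest : ∀ C ∈ cycles t, C ≠ C₀ → C.card = 1 := by
      intro C hC hne
      by_contra hC1
      have h2C : 2 ≤ C.card := by
        have := Finset.card_pos.2 (cycles_nonempty hC); omega
      have hlt : ∑ _C ∈ (cycles t).erase C₀, (1 : ℕ) < ∑ C ∈ (cycles t).erase C₀, C.card :=
        Finset.sum_lt_sum hbound ⟨C, Finset.mem_erase.2 ⟨hne, hC⟩, by omega⟩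
      rw [Finset.sum_const, smul_eq_mul, mul_one] at hlt
      omega
    obtain ⟨i, j, hij, hC₀ij⟩ := Finset.card_eq_two.1 hcard2
    have hiC₀ : i ∈ C₀ := by rw [hC₀ij]; simp
    have hjC₀ : j ∈ C₀ := by rw [hC₀ij]; simp
    have hfix : ∀ x, x ∉ C₀ → t.perm x = x := by
      intro x hx
      have hcyc_x : t.cycleOf x ∈ cycles t := cycleOf_mem_cycles t x
      have hne : t.cycleOf x ≠ C₀ := fun h => hx (h ▸ self_mem_cycleOf t x)
      have hone := hrest _ hcyc_x hne
      have hmem := perm_apply_mem_cycleOf t x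
      rw [cycleOf_card_one hone, Finset.mem_singleton] at hmem
      exact hmem
    have hcycI : t.cycleOf i = C₀ := eq_cycleOf_of_mem_cycles hC₀ hiC₀
    have hcycJ : t.cycleOf j = C₀ := eq_cycleOf_of_mem_cycles hC₀ hjC₀
    have hpi : t.perm i = j := by
      have hmem := perm_apply_mem_cycleOf t i
      rw [hcycI, hC₀ij] at hmem
      simp only [Finset.mem_insert, Finset.mem_singleton] at hmem
      rcases hmem with h | h
      · exfalso
        have hs : t.cycleOf i = {i} := cycleOf_eq_singleton h
        rw [hcycI, hC₀ij] at hs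
        have : j ∈ ({i} : Finset (Fin n)) := hs ▸ (by simp : j ∈ insert i ({j} : Finset (Fin n)))
        simp at this
        exact hij this.symm
      · exact h
    have hpj : t.perm j = i := by
      have hmem := perm_apply_mem_cycleOf t j
      rw [hcycJ, hC₀ij] at hmem
      simp only [Finset.mem_insert, Finset.mem_singleton] at hmem
      rcases hmem with h | h
      · exact h
      · exfalso
        have hs : t.cycleOf j = {j} := cycleOf_eq_singleton h
        rw [hcycJ, hC₀ij] at hs
        have : i ∈ ({j} : Finset (Fin n)) := hs ▸ (by simp : i ∈ insert i ({j} : Finset (Fin n)))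
        simp at this
        exact hij this
    have hwt0 : ∀ x, x ∉ C₀ → t.wt x = 0 := by
      intro x hx
      have hcyc_x := cycleOf_mem_cycles t x
      have hne : t.cycleOf x ≠ C₀ := fun h => hx (h ▸ self_mem_cycleOf t x)
      have hone := hrest _ hcyc_x hne
      have hz := hallz _ hcyc_x
      rw [cycleOf_card_one hone, cycWt_singleton] at hz
      exact hz
    have hwtij : t.wt i + t.wt j = 0 := by
      have hz := hallz _ hC₀
      rw [hC₀ij, cycWt, Finset.sum_insert (by simp [hij]), Finset.sum_singleton] at hz
      exact hz
    refine ⟨i, j, t.wt i, hij, ?_⟩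
    ext x
    · have hpx : t.perm x = Equiv.swap i j x := by
        rcases eq_or_ne x i with rfl | h1
        · rw [hpi, Equiv.swap_apply_left]
        · rcases eq_or_ne x j with rfl | h2
          · rw [hpj, Equiv.swap_apply_right]
          · rw [Equiv.swap_apply_of_ne_of_ne h1 h2]
            apply hfix
            rw [hC₀ij]
            simp [h1, h2]
      simp [hpx]
    · rw [mkTrans_wt]
      rcases eq_or_ne x i with rfl | h1
      · rw [if_pos rfl]
      · rcases eq_or_ne x j with rfl | h2
        · rw [if_neg h1, if_pos rfl]
          exact eq_neg_of_add_eq_zero_right hwtij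
        · rw [if_neg h1, if_neg h2]
          apply hwt0
          rw [hC₀ij]
          simp [h1, h2]


/-! ### Partition costs -/

def bCost {m : ℕ} (B : Multiset (ZMod m)) : ℕ :=
  if B.sum = 0 then B.card - 2 else B.card - 1

inductive CanCost {m : ℕ} (p : ℕ) (hpm : p ∣ m) : Multiset (ZMod m) → ℕ → Prop
  | zero : CanCost p hpm 0 0
  | block {A : Multiset (ZMod m)} {c : ℕ} (B : Multiset (ZMod m)) :
      CanCost p hpm A c → B ≠ 0 → ZMod.castHom hpm (ZMod p) B.sum = 0 →
      CanCost p hpm (A + B) (c + bCost B)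

theorem bCost_le (B : Multiset (ZMod m)) : bCost B ≤ B.card - 1 := by
  rw [bCost]; split <;> omega

theorem bCost_ge (B : Multiset (ZMod m)) : B.card - 2 ≤ bCost B := by
  rw [bCost]; split <;> omega

theorem bCost_singleton (a : ZMod m) : bCost ({a} : Multiset (ZMod m)) = 0 := by
  rw [bCost]
  split <;> simp

theorem bCost_merge (a b : ZMod m) (B₁ B₂ : Multiset (ZMod m)) :
    bCost ((a + b) ::ₘ (B₁ + B₂)) ≤ bCost (a ::ₘ B₁) + bCost (b ::ₘ B₂) + 1 := by
  rw [bCost, bCost, bCost]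
  simp only [Multiset.sum_cons, Multiset.card_cons, Multiset.card_add, Multiset.sum_add]
  by_cases h1 : a + B₁.sum = 0 <;> by_cases h2 : b + B₂.sum = 0
  · have h3 : a + b + (B₁.sum + B₂.sum) = 0 := by
      rw [show a + b + (B₁.sum + B₂.sum) = a + B₁.sum + (b + B₂.sum) by ring, h1, h2, add_zero]
    rw [if_pos h3, if_pos h1, if_pos h2]
    omega
  · rw [if_pos h1, if_neg h2]; split <;> omega
  · rw [if_neg h1, if_pos h2]; split <;> omega
  · rw [if_neg h1, if_neg h2]; split <;> omega

theorem bCost_merge_same (a b : ZMod m) (B : Multiset (ZMod m)) :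
    bCost ((a + b) ::ₘ B) ≤ bCost (a ::ₘ b ::ₘ B) := by
  rw [bCost, bCost]
  simp only [Multiset.sum_cons, Multiset.card_cons]
  rw [show a + (b + B.sum) = a + b + B.sum by ring]
  split <;> omega

theorem bCost_split (a₁ a₂ : ZMod m) (B : Multiset (ZMod m)) :
    bCost (a₁ ::ₘ a₂ ::ₘ B) ≤ bCost ((a₁ + a₂) ::ₘ B) + 1 := by
  rw [bCost, bCost]
  simp only [Multiset.sum_cons, Multiset.card_cons]
  rw [show a₁ + (a₂ + B.sum) = a₁ + a₂ + B.sum by ring]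
  split <;> omega

theorem CanCost.consSingle {p : ℕ} {hpm : p ∣ m} {A : Multiset (ZMod m)} {c : ℕ}
    (h : CanCost p hpm A c) (d : ZMod m) (hφ : ZMod.castHom hpm (ZMod p) d = 0) :
    CanCost p hpm (d ::ₘ A) c := by
  have hb := CanCost.block ({d} : Multiset (ZMod m)) h (by simp)
    (by rwa [Multiset.sum_singleton])
  have e : A + ({d} : Multiset (ZMod m)) = d ::ₘ A := by
    rw [add_comm, Multiset.singleton_add]
  rw [e, bCost_singleton, add_zero] at hb
  exact hb

theorem CanCost.consPair {p : ℕ} {hpm : p ∣ m} {A : Multiset (ZMod m)} {c : ℕ}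
    (h : CanCost p hpm A c) (a : ZMod m) :
    CanCost p hpm (a ::ₘ (-a) ::ₘ A) c := by
  have hsum : (a ::ₘ ({-a} : Multiset (ZMod m))).sum = 0 := by
    rw [Multiset.sum_cons, Multiset.sum_singleton, add_neg_cancel]
  have hb := CanCost.block (a ::ₘ ({-a} : Multiset (ZMod m))) h (by simp)
    (by rw [hsum, RingHom.map_zero])
  have e : A + (a ::ₘ ({-a} : Multiset (ZMod m))) = a ::ₘ (-a) ::ₘ A := by
    rw [Multiset.add_cons, add_comm, Multiset.singleton_add]
  have hbc : bCost (a ::ₘ ({-a} : Multiset (ZMod m))) = 0 := by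
    rw [bCost, if_pos hsum]
    simp
  rw [e, hbc, add_zero] at hb
  exact hb

theorem CanCost.extract {p : ℕ} {hpm : p ∣ m} {A : Multiset (ZMod m)} {c : ℕ}
    (h : CanCost p hpm A c) {a : ZMod m} (ha : a ∈ A) :
    ∃ A₁ B c₁, CanCost p hpm A₁ c₁ ∧ A = A₁ + (a ::ₘ B) ∧
      ZMod.castHom hpm (ZMod p) (a ::ₘ B).sum = 0 ∧ c = c₁ + bCost (a ::ₘ B) := by
  induction h with
  | zero => simp at ha
  | @block A₀ c₀ B₀ h₀ hB₀ hφ₀ ih =>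
    rcases Multiset.mem_add.1 ha with h1 | h2
    · obtain ⟨A₁, B, c₁, hcc, hEq, hφ, hcost⟩ := ih h1
      refine ⟨A₁ + B₀, B, c₁ + bCost B₀, CanCost.block B₀ hcc hB₀ hφ₀, ?_, hφ, by omega⟩
      rw [hEq, add_right_comm]
    · obtain ⟨B', rfl⟩ := Multiset.exists_cons_of_mem h2
      exact ⟨A₀, B', c₀, h₀, rfl, hφ₀, rfl⟩

theorem CanCost.remove {p : ℕ} {hpm : p ∣ m} {A : Multiset (ZMod m)} {a : ZMod m} {c : ℕ}
    (h : CanCost p hpm (a ::ₘ A) c) (hφa : ZMod.castHom hpm (ZMod p) a = 0) :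
    ∃ c' ≤ c, CanCost p hpm A c' := by
  obtain ⟨A₁, B, c₁, hcc, hEq, hφ, hcost⟩ := h.extract (Multiset.mem_cons_self a A)
  rw [Multiset.add_cons] at hEq
  have hA : A = A₁ + B := (Multiset.cons_inj_right a).1 hEq
  rcases eq_or_ne B 0 with rfl | hB
  · rw [add_zero] at hA
    exact ⟨c₁, by omega, hA ▸ hcc⟩
  · refine ⟨c₁ + bCost B, ?_, ?_⟩
    · have h1 : bCost B ≤ B.card - 1 := bCost_le B
      have h2 : (a ::ₘ B).card - 2 ≤ bCost (a ::ₘ B) := bCost_ge _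
      have h3 : (a ::ₘ B).card = B.card + 1 := by rw [Multiset.card_cons]
      have h4 : 1 ≤ B.card := Multiset.card_pos.2 hB
      omega
    · rw [hA]
      refine CanCost.block B hcc hB ?_
      rw [Multiset.sum_cons, RingHom.map_add, hφa, zero_add] at hφ
      exact hφ

theorem CanCost.shift {p : ℕ} {hpm : p ∣ m} {A : Multiset (ZMod m)} {a : ZMod m} {c : ℕ}
    (h : CanCost p hpm (a ::ₘ A) c) (d : ZMod m)
    (hφd : ZMod.castHom hpm (ZMod p) d = 0) :
    ∃ c' ≤ c + 1, CanCost p hpm ((a + d) ::ₘ A) c' := by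
  obtain ⟨A₁, B, c₁, hcc, hEq, hφ, hcost⟩ := h.extract (Multiset.mem_cons_self a A)
  rw [Multiset.add_cons] at hEq
  have hA : A = A₁ + B := (Multiset.cons_inj_right a).1 hEq
  refine ⟨c₁ + bCost ((a + d) ::ₘ B), ?_, ?_⟩
  · have h1 := bCost_le ((a + d) ::ₘ B)
    have h2 := bCost_ge (a ::ₘ B)
    have e1 : ((a + d) ::ₘ B).card = (a ::ₘ B).card := by
      rw [Multiset.card_cons, Multiset.card_cons]
    omega
  · have e : (a + d) ::ₘ A = A₁ + ((a + d) ::ₘ B) := by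
      rw [hA, Multiset.add_cons]
    rw [e]
    refine CanCost.block _ hcc (by simp) ?_
    rw [Multiset.sum_cons, show a + d + B.sum = a + B.sum + d by ring, RingHom.map_add]
    rw [Multiset.sum_cons] at hφ
    rw [hφ, hφd, add_zero]

theorem CanCost.merge2 {p : ℕ} {hpm : p ∣ m} {A : Multiset (ZMod m)} {c : ℕ}
    (h : CanCost p hpm A c) {a b : ZMod m} (ha : a ∈ A) (hb : b ∈ A.erase a) :
    ∃ c' ≤ c + 1, CanCost p hpm ((a + b) ::ₘ ((A.erase a).erase b)) c' := by
  obtain ⟨A₁, B₁, c₁, hcc, hEq, hφ, hcost⟩ := h.extract ha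
  have hAe : A.erase a = A₁ + B₁ := by
    rw [hEq, Multiset.add_cons, Multiset.erase_cons_head]
  rw [hAe] at hb
  rcases Multiset.mem_add.1 hb with hb1 | hb2
  · -- b in the remainder A₁
    obtain ⟨A₂, B₂, c₂, hcc₂, hEq₂, hφ₂, hcost₂⟩ := hcc.extract hb1
    refine ⟨c₂ + bCost ((a + b) ::ₘ (B₁ + B₂)), ?_, ?_⟩
    · have g1 := bCost_merge a b B₁ B₂
      omega
    · have e : (a + b) ::ₘ ((A₁ + B₁).erase b) = A₂ + ((a + b) ::ₘ (B₁ + B₂)) := by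
        rw [hEq₂]
        calc (a + b) ::ₘ ((A₂ + (b ::ₘ B₂) + B₁).erase b)
            = (a + b) ::ₘ ((b ::ₘ (A₂ + B₂ + B₁)).erase b) := by
              rw [Multiset.add_cons, Multiset.cons_add]
          _ = (a + b) ::ₘ (A₂ + B₂ + B₁) := by rw [Multiset.erase_cons_head]
          _ = A₂ + ((a + b) ::ₘ (B₁ + B₂)) := by
              rw [Multiset.add_cons]
              congr 1
              abel
      rw [hAe, e]
      refine CanCost.block _ hcc₂ (by simp) ?_
      rw [Multiset.sum_cons, Multiset.sum_add,
        show a + b + (B₁.sum + B₂.sum) = (a + B₁.sum) + (b + B₂.sum) by ring,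
        RingHom.map_add]
      rw [Multiset.sum_cons] at hφ hφ₂
      rw [hφ, hφ₂, add_zero]
  · -- b in the same block B₁
    obtain ⟨B₂, rfl⟩ := Multiset.exists_cons_of_mem hb2
    refine ⟨c₁ + bCost ((a + b) ::ₘ B₂), ?_, ?_⟩
    · have g1 := bCost_merge_same a b B₂
      omega
    · have e : (a + b) ::ₘ ((A₁ + (b ::ₘ B₂)).erase b) = A₁ + ((a + b) ::ₘ B₂) := by
        rw [Multiset.add_cons, Multiset.erase_cons_head, Multiset.add_cons]
      rw [hAe, e]
      refine CanCost.block _ hcc (by simp) ?_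
      rw [Multiset.sum_cons] at hφ ⊢
      rw [Multiset.sum_cons] at hφ
      rw [show a + b + B₂.sum = a + (b + B₂.sum) by ring]
      exact hφ

theorem CanCost.split2 {p : ℕ} {hpm : p ∣ m} {A : Multiset (ZMod m)} {a : ZMod m} {c : ℕ}
    (h : CanCost p hpm (a ::ₘ A) c) (a₁ a₂ : ZMod m) (hsum : a₁ + a₂ = a) :
    ∃ c' ≤ c + 1, CanCost p hpm (a₁ ::ₘ a₂ ::ₘ A) c' := by
  obtain ⟨A₁, B, c₁, hcc, hEq, hφ, hcost⟩ := h.extract (Multiset.mem_cons_self a A)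
  rw [Multiset.add_cons] at hEq
  have hA : A = A₁ + B := (Multiset.cons_inj_right a).1 hEq
  refine ⟨c₁ + bCost (a₁ ::ₘ a₂ ::ₘ B), ?_, ?_⟩
  · have g1 := bCost_split a₁ a₂ B
    rw [hsum] at g1
    omega
  · have e : a₁ ::ₘ a₂ ::ₘ A = A₁ + (a₁ ::ₘ a₂ ::ₘ B) := by
      rw [hA, Multiset.add_cons, Multiset.add_cons]
    rw [e]
    refine CanCost.block _ hcc (by simp) ?_
    rw [Multiset.sum_cons, Multiset.sum_cons,
      show a₁ + (a₂ + B.sum) = (a₁ + a₂) + B.sum by ring, hsum]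
    rw [Multiset.sum_cons] at hφ
    exact hφ


/-! ### Facts about the identity and explicit reflections -/

theorem Wm_one_all_zero : ∀ x ∈ Wm (1 : GW m n), x = (0 : ZMod m) := by
  intro x hx
  obtain ⟨C, hC, rfl⟩ := Multiset.mem_map.1 hx
  exact Finset.sum_eq_zero fun i _ => rfl

theorem cycleOf_one (i : Fin n) : (1 : GW m n).cycleOf i = {i} :=
  cycleOf_eq_singleton (by simp)

theorem card_Wm_one : (Wm (1 : GW m n)).card = n := by
  rw [card_Wm]
  have hinj : Function.Injective (fun x : Fin n => (1 : GW m n).cycleOf x) := by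
    intro a b hab
    simpa [cycleOf_one] using hab
  rw [numCycles, cycles, Finset.card_image_of_injective _ hinj, Finset.card_univ,
    Fintype.card_fin]

theorem c0_one : c0 (1 : GW m n) = n := by
  rw [c0_eq_count, Multiset.count_eq_card.2 (fun x hx => (Wm_one_all_zero x hx).symm),
    card_Wm_one]

theorem cdf_one : codimfix (1 : GW m n) = 0 := by
  rw [codimfix, c0_one]
  omega

theorem NZm_one : NZm (1 : GW m n) = 0 := by
  rw [NZm]
  rw [Multiset.filter_eq_nil]
  intro a ha
  simpa using Wm_one_all_zero a ha

theorem isRefl_mkTrans {p : ℕ} {hpm : p ∣ m} {i j : Fin n} (hij : i ≠ j) (c : ZMod m) :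
    IsRefl p hpm (mkTrans i j c) := by
  refine ⟨Gmem_mkTrans hij c, ?_⟩
  have hnc : ¬ (1 : GW m n).perm.SameCycle i j := by
    rw [one_perm, Equiv.Perm.sameCycle_one]
    exact hij
  obtain ⟨M, h1, h2, h3⟩ := surgery hij c hnc
  rw [mul_one] at h2 h3
  have hz := Wm_one_all_zero (m := m) (n := n)
  have ha : cycWt (1 : GW m n) ((1 : GW m n).cycleOf i) = 0 := by
    apply hz; rw [h1]; exact Multiset.mem_cons_self _ _
  have hb : cycWt (1 : GW m n) ((1 : GW m n).cycleOf j) = 0 := by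
    apply hz; rw [h1]; exact Multiset.mem_cons_of_mem (Multiset.mem_cons_self _ _)
  have hMz : ∀ x ∈ M, x = (0 : ZMod m) := by
    intro x hx; apply hz; rw [h1]
    exact Multiset.mem_cons_of_mem (Multiset.mem_cons_of_mem hx)
  have hcard : n = 2 + M.card := by
    have hc := card_Wm_one (m := m) (n := n)
    rw [h1, Multiset.card_cons, Multiset.card_cons] at hc
    omega
  have hcnt : c0 (mkTrans i j c) = M.card + 1 := by
    rw [c0_eq_count, h2, h3, ha, hb, add_zero, Multiset.count_cons_self,
      Multiset.count_eq_card.2 (fun x hx => (hMz x hx).symm)]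
  rw [codimfix, hcnt]
  omega

theorem isRefl_mkDiag {p : ℕ} {hpm : p ∣ m} {v : Fin n} {d : ZMod m} (hd : d ≠ 0)
    (hφ : ZMod.castHom hpm (ZMod p) d = 0) : IsRefl p hpm (mkDiag v d) := by
  refine ⟨Gmem_mkDiag hφ, ?_⟩
  obtain ⟨M, h1, h2⟩ := diag_surgery (1 : GW m n) v d
  rw [mul_one] at h2
  have hz := Wm_one_all_zero (m := m) (n := n)
  have ha : cycWt (1 : GW m n) ((1 : GW m n).cycleOf v) = 0 := by
    apply hz; rw [h1]; exact Multiset.mem_cons_self _ _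
  have hMz : ∀ x ∈ M, x = (0 : ZMod m) := by
    intro x hx; apply hz; rw [h1]; exact Multiset.mem_cons_of_mem hx
  have hcard : n = 1 + M.card := by
    have hc := card_Wm_one (m := m) (n := n)
    rw [h1, Multiset.card_cons] at hc
    omega
  have hcnt : c0 (mkDiag v d) = M.card := by
    rw [c0_eq_count, h2, ha, zero_add, Multiset.count_cons_of_ne (Ne.symm hd),
      Multiset.count_eq_card.2 (fun x hx => (hMz x hx).symm)]
  rw [codimfix, hcnt]
  omega

/-! ### The invariant `exC` and the lower bound for reflection length -/

theorem filter_ne_cons_zero (M : Multiset (ZMod m)) :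
    Multiset.filter (fun z : ZMod m => z ≠ 0) ((0 : ZMod m) ::ₘ M) =
      Multiset.filter (fun z : ZMod m => z ≠ 0) M :=
  Multiset.filter_cons_of_neg _ (by simp)

theorem filter_ne_cons (M : Multiset (ZMod m)) {a : ZMod m} (ha : a ≠ 0) :
    Multiset.filter (fun z : ZMod m => z ≠ 0) (a ::ₘ M) =
      a ::ₘ Multiset.filter (fun z : ZMod m => z ≠ 0) M :=
  Multiset.filter_cons_of_pos _ ha

noncomputable def exC (p : ℕ) (hpm : p ∣ m) (w : GW m n) : ℕ :=
  sInf {c | CanCost p hpm (NZm w) c}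

theorem exC_le {p : ℕ} {hpm : p ∣ m} {w : GW m n} {c : ℕ}
    (h : CanCost p hpm (NZm w) c) : exC p hpm w ≤ c := Nat.sInf_le h

theorem exC_spec {p : ℕ} {hpm : p ∣ m} {w : GW m n} (hw : Gmem p hpm w) :
    CanCost p hpm (NZm w) (exC p hpm w) := by
  have hne : {c | CanCost p hpm (NZm w) c}.Nonempty := by
    rcases eq_or_ne (NZm w) 0 with h0 | h0
    · exact ⟨0, by rw [Set.mem_setOf_eq, h0]; exact CanCost.zero⟩
    · refine ⟨0 + bCost (NZm w), ?_⟩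
      rw [Set.mem_setOf_eq]
      have hb := CanCost.block (NZm w) (CanCost.zero (p := p) (hpm := hpm)) h0
        (by rw [sum_NZm]; exact hw)
      rwa [zero_add] at hb
  exact Nat.sInf_mem hne

theorem lower_bound {p : ℕ} {hpm : p ∣ m} (l : List (GW m n))
    (hl : ∀ t ∈ l, IsRefl p hpm t) :
    ∃ c, CanCost p hpm (NZm l.prod) c ∧ codimfix l.prod + c ≤ l.length := by
  induction l with
  | nil =>
    refine ⟨0, ?_, ?_⟩
    · rw [List.prod_nil, NZm_one]
      exact CanCost.zero
    · rw [List.prod_nil, cdf_one]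
      simp
  | cons t l ih =>
    obtain ⟨c, hcc, hlen⟩ := ih fun s hs => hl s (List.mem_cons_of_mem t hs)
    have ht := hl t List.mem_cons_self
    rw [List.prod_cons, List.length_cons]
    set x := l.prod with hxdef
    rcases refl_classify ht with ⟨v, d, hd0, hφd, rfl⟩ | ⟨i, j, c₀, hij, rfl⟩
    · -- diagonal reflection
      obtain ⟨M, h1, h2⟩ := diag_surgery x v d
      set a := cycWt x (x.cycleOf v) with hadef
      set fM := Multiset.filter (fun z : ZMod m => z ≠ 0) M with hfM
      have hNx : NZm x = Multiset.filter (fun z : ZMod m => z ≠ 0) (a ::ₘ M) := by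
        rw [NZm, h1]
      have hNtx : NZm (mkDiag v d * x) =
          Multiset.filter (fun z : ZMod m => z ≠ 0) ((a + d) ::ₘ M) := by
        rw [NZm, h2]
      have hc0x : c0 x = (a ::ₘ M).count 0 := by rw [c0_eq_count, h1]
      have hc0tx : c0 (mkDiag v d * x) = ((a + d) ::ₘ M).count 0 := by rw [c0_eq_count, h2]
      have hcardx : M.card + 1 ≤ n := by
        have hn := numCycles_le x
        rw [← card_Wm, h1, Multiset.card_cons] at hn
        omega
      have hkK : M.count 0 ≤ M.card := Multiset.count_le_card 0 M
      have hcdfx : codimfix x = n - c0 x := rfl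
      have hcdftx : codimfix (mkDiag v d * x) = n - c0 (mkDiag v d * x) := rfl
      rcases eq_or_ne a 0 with ha0 | ha0
      · have e1 : NZm x = fM := by
          rw [hNx, ha0, filter_ne_cons_zero, hfM]
        have e2 : NZm (mkDiag v d * x) = (a + d) ::ₘ fM := by
          rw [hNtx, filter_ne_cons M (by rw [ha0, zero_add]; exact hd0), hfM]
        refine ⟨c, ?_, ?_⟩
        · rw [e2]
          refine CanCost.consSingle ?_ (a + d) (by rw [ha0, zero_add]; exact hφd)
          rwa [e1] at hcc
        · rw [hcdftx, hc0tx, Multiset.count_cons_of_ne (by rw [ha0, zero_add]; exact Ne.symm hd0)]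
          rw [hcdfx, hc0x, ha0, Multiset.count_cons_self] at hlen
          omega
      · rcases eq_or_ne (a + d) 0 with had | had
        · have e1 : NZm x = a ::ₘ fM := by
            rw [hNx, filter_ne_cons M ha0, hfM]
          have e2 : NZm (mkDiag v d * x) = fM := by
            rw [hNtx, had, filter_ne_cons_zero, hfM]
          rw [e1] at hcc
          obtain ⟨c', hc'le, hcc'⟩ := hcc.remove (by
            rw [show a = -d from eq_neg_of_add_eq_zero_left had, RingHom.map_neg, hφd, neg_zero])
          refine ⟨c', by rwa [e2], ?_⟩
          rw [hcdftx, hc0tx, had, Multiset.count_cons_self]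
          rw [hcdfx, hc0x, Multiset.count_cons_of_ne (Ne.symm ha0)] at hlen
          omega
        · have e1 : NZm x = a ::ₘ fM := by
            rw [hNx, filter_ne_cons M ha0, hfM]
          have e2 : NZm (mkDiag v d * x) = (a + d) ::ₘ fM := by
            rw [hNtx, filter_ne_cons M had, hfM]
          rw [e1] at hcc
          obtain ⟨c', hc'le, hcc'⟩ := hcc.shift d hφd
          refine ⟨c', by rwa [e2], ?_⟩
          rw [hcdftx, hc0tx, Multiset.count_cons_of_ne (Ne.symm had)]
          rw [hcdfx, hc0x, Multiset.count_cons_of_ne (Ne.symm ha0)] at hlen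
          omega
    · -- transposition-type reflection
      by_cases hsc : x.perm.SameCycle i j
      · -- split case
        set y := mkTrans i j c₀ * x with hydef
        have hnc' : ¬ y.perm.SameCycle i j := by
          rw [hydef]
          exact sc_split_not hij hsc
        obtain ⟨M, h1, h2, h3⟩ := surgery hij c₀ hnc'
        have hyy : mkTrans i j c₀ * y = x := by
          rw [hydef, mkTrans_cancel hij c₀ x]
        rw [hyy] at h2 h3
        set a₁ := cycWt y (y.cycleOf i) with ha1def
        set a₂ := cycWt y (y.cycleOf j) with ha2def
        set fM := Multiset.filter (fun z : ZMod m => z ≠ 0) M with hfM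
        have hNx : NZm x = Multiset.filter (fun z : ZMod m => z ≠ 0)
            ((a₁ + a₂) ::ₘ M) := by rw [NZm, h2, h3]
        have hNy : NZm y = Multiset.filter (fun z : ZMod m => z ≠ 0)
            (a₁ ::ₘ a₂ ::ₘ M) := by rw [NZm, h1]
        have hc0x : c0 x = ((a₁ + a₂) ::ₘ M).count 0 := by rw [c0_eq_count, h2, h3]
        have hc0y : c0 y = (a₁ ::ₘ a₂ ::ₘ M).count 0 := by rw [c0_eq_count, h1]
        have hcardy : M.card + 2 ≤ n := by
          have hn := numCycles_le y
          rw [← card_Wm, h1, Multiset.card_cons, Multiset.card_cons] at hn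
          omega
        have hkK : M.count 0 ≤ M.card := Multiset.count_le_card 0 M
        have hcdfx : codimfix x = n - c0 x := rfl
        have hcdfy : codimfix y = n - c0 y := rfl
        rcases eq_or_ne a₁ 0 with ha1 | ha1 <;> rcases eq_or_ne a₂ 0 with ha2 | ha2
        · have e1 : NZm x = fM := by
            rw [hNx, ha1, ha2, add_zero, filter_ne_cons_zero, hfM]
          have e2 : NZm y = fM := by
            rw [hNy, ha1, ha2, filter_ne_cons_zero, filter_ne_cons_zero, hfM]
          refine ⟨c, by rw [e2, ← e1]; exact hcc, ?_⟩
          rw [hcdfy, hc0y, ha1, ha2, Multiset.count_cons_self, Multiset.count_cons_self]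
          rw [hcdfx, hc0x, ha1, ha2, add_zero, Multiset.count_cons_self] at hlen
          omega
        · have e1 : NZm x = a₂ ::ₘ fM := by
            rw [hNx, ha1, zero_add, filter_ne_cons M ha2, hfM]
          have e2 : NZm y = a₂ ::ₘ fM := by
            rw [hNy, ha1, filter_ne_cons_zero, filter_ne_cons M ha2, hfM]
          refine ⟨c, by rw [e2, ← e1]; exact hcc, ?_⟩
          rw [hcdfy, hc0y, ha1, Multiset.count_cons_self,
            Multiset.count_cons_of_ne (Ne.symm ha2)]
          rw [hcdfx, hc0x, ha1, zero_add, Multiset.count_cons_of_ne (Ne.symm ha2)] at hlen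
          omega
        · have e1 : NZm x = a₁ ::ₘ fM := by
            rw [hNx, ha2, add_zero, filter_ne_cons M ha1, hfM]
          have e2 : NZm y = a₁ ::ₘ fM := by
            rw [hNy, ha2]
            rw [show (a₁ ::ₘ (0 : ZMod m) ::ₘ M) = a₁ ::ₘ ((0 : ZMod m) ::ₘ M) from rfl]
            rw [filter_ne_cons _ ha1, filter_ne_cons_zero, hfM]
          refine ⟨c, by rw [e2, ← e1]; exact hcc, ?_⟩
          rw [hcdfy, hc0y, ha2, Multiset.count_cons_of_ne (Ne.symm ha1),
            Multiset.count_cons_self]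
          rw [hcdfx, hc0x, ha2, add_zero, Multiset.count_cons_of_ne (Ne.symm ha1)] at hlen
          omega
        · rcases eq_or_ne (a₁ + a₂) 0 with hsum | hsum
          · have e1 : NZm x = fM := by
              rw [hNx, hsum, filter_ne_cons_zero, hfM]
            have e2 : NZm y = a₁ ::ₘ a₂ ::ₘ fM := by
              rw [hNy, filter_ne_cons _ ha1, filter_ne_cons M ha2, hfM]
            rw [e1] at hcc
            refine ⟨c, ?_, ?_⟩
            · rw [e2, show a₂ = -a₁ from eq_neg_of_add_eq_zero_right hsum]
              exact hcc.consPair a₁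
            · rw [hcdfy, hc0y, Multiset.count_cons_of_ne (Ne.symm ha1),
                Multiset.count_cons_of_ne (Ne.symm ha2)]
              rw [hcdfx, hc0x, hsum, Multiset.count_cons_self] at hlen
              omega
          · have e1 : NZm x = (a₁ + a₂) ::ₘ fM := by
              rw [hNx, filter_ne_cons M hsum, hfM]
            have e2 : NZm y = a₁ ::ₘ a₂ ::ₘ fM := by
              rw [hNy, filter_ne_cons _ ha1, filter_ne_cons M ha2, hfM]
            rw [e1] at hcc
            obtain ⟨c', hc'le, hcc'⟩ := hcc.split2 a₁ a₂ rfl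
            refine ⟨c', by rwa [e2], ?_⟩
            rw [hcdfy, hc0y, Multiset.count_cons_of_ne (Ne.symm ha1),
              Multiset.count_cons_of_ne (Ne.symm ha2)]
            rw [hcdfx, hc0x, Multiset.count_cons_of_ne (Ne.symm hsum)] at hlen
            omega
      · -- merge case
        obtain ⟨M, h1, h2, h3⟩ := surgery hij c₀ hsc
        set a := cycWt x (x.cycleOf i) with hadef
        set b := cycWt x (x.cycleOf j) with hbdef
        set fM := Multiset.filter (fun z : ZMod m => z ≠ 0) M with hfM
        have hNx : NZm x = Multiset.filter (fun z : ZMod m => z ≠ 0) (a ::ₘ b ::ₘ M) := by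
          rw [NZm, h1]
        have hNtx : NZm (mkTrans i j c₀ * x) =
            Multiset.filter (fun z : ZMod m => z ≠ 0) ((a + b) ::ₘ M) := by
          rw [NZm, h2, h3]
        have hc0x : c0 x = (a ::ₘ b ::ₘ M).count 0 := by rw [c0_eq_count, h1]
        have hc0tx : c0 (mkTrans i j c₀ * x) = ((a + b) ::ₘ M).count 0 := by
          rw [c0_eq_count, h2, h3]
        have hcardx : M.card + 2 ≤ n := by
          have hn := numCycles_le x
          rw [← card_Wm, h1, Multiset.card_cons, Multiset.card_cons] at hn
          omega
        have hkK : M.count 0 ≤ M.card := Multiset.count_le_card 0 M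
        have hcdfx : codimfix x = n - c0 x := rfl
        have hcdftx : codimfix (mkTrans i j c₀ * x) = n - c0 (mkTrans i j c₀ * x) := rfl
        rcases eq_or_ne a 0 with ha1 | ha1 <;> rcases eq_or_ne b 0 with ha2 | ha2
        · have e1 : NZm x = fM := by
            rw [hNx, ha1, ha2, filter_ne_cons_zero, filter_ne_cons_zero, hfM]
          have e2 : NZm (mkTrans i j c₀ * x) = fM := by
            rw [hNtx, ha1, ha2, add_zero, filter_ne_cons_zero, hfM]
          refine ⟨c, by rw [e2, ← e1]; exact hcc, ?_⟩
          rw [hcdftx, hc0tx, ha1, ha2, add_zero, Multiset.count_cons_self]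
          rw [hcdfx, hc0x, ha1, ha2, Multiset.count_cons_self, Multiset.count_cons_self] at hlen
          omega
        · have e1 : NZm x = b ::ₘ fM := by
            rw [hNx, ha1, filter_ne_cons_zero, filter_ne_cons M ha2, hfM]
          have e2 : NZm (mkTrans i j c₀ * x) = b ::ₘ fM := by
            rw [hNtx, ha1, zero_add, filter_ne_cons M ha2, hfM]
          refine ⟨c, by rw [e2, ← e1]; exact hcc, ?_⟩
          rw [hcdftx, hc0tx, ha1, zero_add, Multiset.count_cons_of_ne (Ne.symm ha2)]
          rw [hcdfx, hc0x, ha1, Multiset.count_cons_self,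
            Multiset.count_cons_of_ne (Ne.symm ha2)] at hlen
          omega
        · have e1 : NZm x = a ::ₘ fM := by
            rw [hNx, ha2]
            rw [show (a ::ₘ (0 : ZMod m) ::ₘ M) = a ::ₘ ((0 : ZMod m) ::ₘ M) from rfl]
            rw [filter_ne_cons _ ha1, filter_ne_cons_zero, hfM]
          have e2 : NZm (mkTrans i j c₀ * x) = a ::ₘ fM := by
            rw [hNtx, ha2, add_zero, filter_ne_cons M ha1, hfM]
          refine ⟨c, by rw [e2, ← e1]; exact hcc, ?_⟩
          rw [hcdftx, hc0tx, ha2, add_zero, Multiset.count_cons_of_ne (Ne.symm ha1)]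
          rw [hcdfx, hc0x, ha2, Multiset.count_cons_of_ne (Ne.symm ha1),
            Multiset.count_cons_self] at hlen
          omega
        · have e1 : NZm x = a ::ₘ b ::ₘ fM := by
            rw [hNx, filter_ne_cons _ ha1, filter_ne_cons M ha2, hfM]
          rw [e1] at hcc
          have hmem_a : a ∈ a ::ₘ b ::ₘ fM := Multiset.mem_cons_self _ _
          have hmem_b : b ∈ (a ::ₘ b ::ₘ fM).erase a := by
            rw [Multiset.erase_cons_head]
            exact Multiset.mem_cons_self _ _
          obtain ⟨c', hc'le, hcc'⟩ := hcc.merge2 hmem_a hmem_b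
          rw [Multiset.erase_cons_head, Multiset.erase_cons_head] at hcc'
          rcases eq_or_ne (a + b) 0 with hsum | hsum
          · have e2 : NZm (mkTrans i j c₀ * x) = fM := by
              rw [hNtx, hsum, filter_ne_cons_zero, hfM]
            rw [hsum] at hcc'
            obtain ⟨c'', hc''le, hcc''⟩ := hcc'.remove (RingHom.map_zero _)
            refine ⟨c'', by rwa [e2], ?_⟩
            rw [hcdftx, hc0tx, hsum, Multiset.count_cons_self]
            rw [hcdfx, hc0x, Multiset.count_cons_of_ne (Ne.symm ha1),
              Multiset.count_cons_of_ne (Ne.symm ha2)] at hlen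
            omega
          · have e2 : NZm (mkTrans i j c₀ * x) = (a + b) ::ₘ fM := by
              rw [hNtx, filter_ne_cons M hsum, hfM]
            refine ⟨c', by rwa [e2], ?_⟩
            rw [hcdftx, hc0tx, Multiset.count_cons_of_ne (Ne.symm hsum)]
            rw [hcdfx, hc0x, Multiset.count_cons_of_ne (Ne.symm ha1),
              Multiset.count_cons_of_ne (Ne.symm ha2)] at hlen
            omega


/-! ### Upper bound: constructing factorizations -/

theorem mkDiag_mul_neg (v : Fin n) (d : ZMod m) : mkDiag v d * mkDiag v (-d) = 1 := by
  ext x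
  · simp
  · simp only [mul_wt, mkDiag_perm, inv_one, Equiv.Perm.one_apply, mkDiag_wt, one_wt]
    rcases eq_or_ne x v with rfl | h
    · rw [if_pos rfl, if_pos rfl, add_neg_cancel]
    · rw [if_neg h, if_neg h, add_zero]

theorem bCost_drop2 (a b : ZMod m) (B : Multiset (ZMod m)) (hab : a + b = 0) :
    bCost B ≤ bCost (a ::ₘ b ::ₘ B) := by
  rw [bCost, bCost]
  simp only [Multiset.sum_cons, Multiset.card_cons]
  rw [show a + (b + B.sum) = a + b + B.sum by ring, hab, zero_add]
  split <;> omega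

theorem bCost_merge_strict (a b : ZMod m) (B : Multiset (ZMod m)) (hab : a + b ≠ 0) :
    bCost ((a + b) ::ₘ B) + 1 ≤ bCost (a ::ₘ b ::ₘ B) := by
  rw [bCost, bCost]
  simp only [Multiset.sum_cons, Multiset.card_cons]
  rw [show a + (b + B.sum) = a + b + B.sum by ring]
  rcases eq_or_ne (a + b + B.sum) 0 with h | h
  · rw [if_pos h, if_pos h]
    rcases eq_or_ne B 0 with rfl | hB0
    · exfalso
      rw [Multiset.sum_zero, add_zero] at h
      exact hab h
    · have : 1 ≤ B.card := Multiset.card_pos.2 hB0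
      omega
  · rw [if_neg h, if_neg h]
    omega

theorem CanCost.destruct {p : ℕ} {hpm : p ∣ m} {A : Multiset (ZMod m)} {c : ℕ}
    (h : CanCost p hpm A c) (hA : A ≠ 0) :
    ∃ A₁ B c₁, CanCost p hpm A₁ c₁ ∧ B ≠ 0 ∧
      ZMod.castHom hpm (ZMod p) B.sum = 0 ∧ A = A₁ + B ∧ c = c₁ + bCost B := by
  cases h with
  | zero => exact absurd rfl hA
  | block B h hB hφ => exact ⟨_, B, _, h, hB, hφ, rfl, rfl⟩

theorem exists_two_cycles {w : GW m n} {a b : ZMod m} (ha : a ∈ Wm w)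
    (hb : b ∈ (Wm w).erase a) :
    ∃ C D, C ∈ cycles w ∧ D ∈ cycles w ∧ C ≠ D ∧ cycWt w C = a ∧ cycWt w D = b := by
  have ha' := ha
  rw [Wm] at ha'
  obtain ⟨C, hC, hCa⟩ := Multiset.mem_map.1 ha'
  obtain ⟨R, hR⟩ := Multiset.exists_cons_of_mem hC
  have hWm : Wm w = a ::ₘ Multiset.map (cycWt w) R := by
    rw [Wm, hR, Multiset.map_cons, hCa]
  rw [hWm, Multiset.erase_cons_head] at hb
  obtain ⟨D, hD, hDb⟩ := Multiset.mem_map.1 hb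
  have hnodup : ((cycles w).val).Nodup := (cycles w).nodup
  rw [hR] at hnodup
  have hCD : C ≠ D := by
    intro h
    exact (Multiset.nodup_cons.1 hnodup).1 (h ▸ hD)
  refine ⟨C, D, hC, ?_, hCD, hCa, hDb⟩
  show D ∈ (cycles w).val
  rw [hR]
  exact Multiset.mem_cons_of_mem hD

theorem not_sameCycle_of_cycles {w : GW m n} {C D : Finset (Fin n)} (hC : C ∈ cycles w)
    (hD : D ∈ cycles w) (hCD : C ≠ D) {i j : Fin n} (hi : i ∈ C) (hj : j ∈ D) :
    ¬ w.perm.SameCycle i j := by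
  intro h
  apply hCD
  have h1 : w.cycleOf i = C := eq_cycleOf_of_mem_cycles hC hi
  have h2 : w.cycleOf j = D := eq_cycleOf_of_mem_cycles hD hj
  rw [← h1, ← h2]
  exact (cycleOf_eq_of_mem (mem_cycleOf.2 h)).symm

theorem upper_bound {p : ℕ} {hpm : p ∣ m} :
    ∀ N (w : GW m n), Gmem p hpm w → codimfix w + exC p hpm w ≤ N →
      ∃ l : List (GW m n), (∀ t ∈ l, IsRefl p hpm t) ∧ l.prod = w ∧
        l.length ≤ codimfix w + exC p hpm w := by
  intro N
  induction N with
  | zero =>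
    intro w hw hN
    have hcdf : codimfix w = 0 := by omega
    have hc0 : c0 w = n := by
      have h1 := c0_le_numCycles w
      have h2 := numCycles_le w
      rw [codimfix] at hcdf
      omega
    rw [eq_one_of_c0 hc0]
    exact ⟨[], by simp, List.prod_nil, Nat.zero_le _⟩
  | succ N ih =>
    intro w hw hN
    by_cases hle : codimfix w + exC p hpm w ≤ N
    · exact ih w hw hle
    have hfacts : c0 w ≤ numCycles w ∧ numCycles w ≤ n := ⟨c0_le_numCycles w, numCycles_le w⟩
    by_cases hbig : ∃ C ∈ cycles w, 2 ≤ C.card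
    · -- split off a fixed point from a big cycle
      obtain ⟨C, hC, hC2⟩ := hbig
      obtain ⟨v, hv⟩ := cycles_nonempty hC
      have hvC : w.cycleOf v = C := eq_cycleOf_of_mem_cycles hC hv
      have hvu : v ≠ w.perm v := by
        intro h
        have hs : w.cycleOf v = {v} := cycleOf_eq_singleton h.symm
        rw [hvC] at hs
        rw [hs] at hC2
        simp at hC2
      set t := mkTrans v (w.perm v) (-(w.wt (w.perm v))) with htdef
      set y := t * w with hydef
      have hpermy : y.perm v = v := by
        rw [hydef, mul_perm, htdef, mkTrans_perm, Equiv.Perm.mul_apply, Equiv.swap_apply_right]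
      have hnc' : ¬ y.perm.SameCycle v (w.perm v) := by
        intro h
        exact hvu (h.eq_of_left hpermy)
      obtain ⟨M, h1, h2, h3⟩ := surgery hvu (-(w.wt (w.perm v))) hnc'
      have hyy : t * y = w := by
        rw [hydef, htdef, mkTrans_cancel hvu _ w]
      rw [show mkTrans v (w.perm v) (-(w.wt (w.perm v))) * y = w from by
        rw [← htdef]; exact hyy] at h2 h3
      have hcycv : y.cycleOf v = {v} := cycleOf_eq_singleton hpermy
      have hywt : y.wt v = 0 := by
        rw [hydef, mul_wt, htdef, mkTrans_perm, Equiv.swap_inv, mkTrans_wt, if_pos rfl,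
          Equiv.swap_apply_left, neg_add_cancel]
      have hA1 : cycWt y (y.cycleOf v) = 0 := by
        rw [hcycv, cycWt_singleton]
        exact hywt
      rw [hA1, zero_add] at h3
      rw [hA1] at h1
      rw [h3] at h2
      -- now : Wm y = 0 ::ₘ A2 ::ₘ M, Wm w = A2 ::ₘ M where A2 := cycWt y (y.cycleOf (w.perm v))
      have hNeq : NZm y = NZm w := by
        rw [NZm, NZm, h1, h2, filter_ne_cons_zero]
      have hc0y : c0 y = c0 w + 1 := by
        rw [c0_eq_count, c0_eq_count, h1, h2, Multiset.count_cons_self]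
      have hc0yn : c0 y ≤ n := le_trans (c0_le_numCycles y) (numCycles_le y)
      have hGy : Gmem p hpm y := Gmem_mul (Gmem_mkTrans hvu _) hw
      have hexy : exC p hpm y ≤ exC p hpm w := by
        apply exC_le
        rw [hNeq]
        exact exC_spec hw
      have hcdfy : codimfix y + 1 = codimfix w := by
        rw [codimfix, codimfix, hc0y]
        omega
      obtain ⟨l', hl', hprod', hlen'⟩ := ih y hGy (by omega)
      refine ⟨t :: l', ?_, ?_, ?_⟩
      · intro s hs
        rcases List.mem_cons.1 hs with rfl | hs
        · exact isRefl_mkTrans hvu _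
        · exact hl' s hs
      · rw [List.prod_cons, hprod']
        exact hyy
      · rw [List.length_cons]
        omega
    · -- all cycles are singletons
      push_neg at hbig
      have hall1 : ∀ C ∈ cycles w, C.card = 1 := by
        intro C hC
        have hp := Finset.card_pos.2 (cycles_nonempty hC)
        have hb := hbig C hC
        omega
      have hsing : ∀ x : Fin n, w.cycleOf x = {x} := fun x =>
        cycleOf_card_one (hall1 _ (cycleOf_mem_cycles w x))
      have hnum : numCycles w = n := by
        have hsum : ∑ C ∈ cycles w, C.card = numCycles w := by
          rw [Finset.sum_congr rfl hall1, Finset.sum_const, smul_eq_mul, mul_one]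
          rfl
        rw [sum_card_cycles] at hsum
        omega
      have hcc := exC_spec hw
      rcases eq_or_ne (NZm w) 0 with hNZ | hNZ
      · exfalso
        have hallz : ∀ z ∈ Wm w, z = (0 : ZMod m) := by
          intro z hz
          by_contra hzz
          have : z ∈ NZm w := Multiset.mem_filter.2 ⟨hz, hzz⟩
          rw [hNZ] at this
          simp at this
        have hc0 : c0 w = n := by
          rw [c0_eq_count, Multiset.count_eq_card.2 (fun x hx => (hallz x hx).symm), card_Wm,
            hnum]
        have hcdf0 : codimfix w = 0 := by
          rw [codimfix, hc0]
          omega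
        have hex0 : exC p hpm w = 0 := by
          have h := exC_le (w := w) (p := p) (hpm := hpm) (by
            rw [hNZ]; exact CanCost.zero)
          omega
        omega
      obtain ⟨A', B, cA, hccA, hB, hφB, hsplitNZ, hcost⟩ := hcc.destruct hNZ
      obtain ⟨a, haB⟩ := Multiset.exists_mem_of_ne_zero hB
      obtain ⟨B', rfl⟩ := Multiset.exists_cons_of_mem haB
      have haNZ : a ∈ NZm w := by
        rw [hsplitNZ]
        exact Multiset.mem_add.2 (Or.inr (Multiset.mem_cons_self a B'))
      have ha0 : a ≠ 0 := (Multiset.mem_filter.1 haNZ).2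
      rcases eq_or_ne B' 0 with rfl | hB'
      · -- singleton block : diagonal kill
        have hφa : ZMod.castHom hpm (ZMod p) a = 0 := by
          rw [show (a ::ₘ (0 : Multiset (ZMod m))).sum = a from by simp] at hφB
          exact hφB
        -- find the cycle with weight a
        have haWm : a ∈ Wm w := Multiset.mem_of_le (Multiset.filter_le _ _) haNZ
        obtain ⟨C, hC, hCa⟩ := Multiset.mem_map.1 haWm
        obtain ⟨v, hvC⟩ : ∃ v, C = {v} := Finset.card_eq_one.1 (hall1 C hC)
        have hwv : w.wt v = a := by
          rw [hvC, cycWt_singleton] at hCa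
          exact hCa
        set t := mkDiag v (-a) with htdef
        set y := t * w with hydef
        obtain ⟨M, h1, h2⟩ := diag_surgery w v (-a)
        rw [← hydef] at h2
        have hcycwv : cycWt w (w.cycleOf v) = a := by
          rw [hsing v, cycWt_singleton, hwv]
        rw [hcycwv] at h1 h2
        rw [add_neg_cancel] at h2
        have hNw : NZm w = a ::ₘ Multiset.filter (fun z : ZMod m => z ≠ 0) M := by
          rw [NZm, h1, filter_ne_cons M ha0]
        have hNy : NZm y = Multiset.filter (fun z : ZMod m => z ≠ 0) M := by
          rw [NZm, h2, filter_ne_cons_zero]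
        have hA'eq : A' = Multiset.filter (fun z : ZMod m => z ≠ 0) M := by
          have e1 : NZm w = a ::ₘ A' := by
            rw [hsplitNZ, Multiset.add_cons, add_zero]
          rw [e1] at hNw
          exact (Multiset.cons_inj_right a).1 hNw
        have hbca : bCost (a ::ₘ (0 : Multiset (ZMod m))) = 0 := bCost_singleton a
        have hexy : exC p hpm y ≤ cA := by
          apply exC_le
          rw [hNy, ← hA'eq]
          exact hccA
        have hc0y : c0 y = c0 w + 1 := by
          rw [c0_eq_count, c0_eq_count, h1, h2, Multiset.count_cons_self,
            Multiset.count_cons_of_ne (Ne.symm ha0)]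
        have hc0yn : c0 y ≤ n := le_trans (c0_le_numCycles y) (numCycles_le y)
        have hGy : Gmem p hpm y :=
          Gmem_mul (Gmem_mkDiag (by rw [RingHom.map_neg, hφa, neg_zero])) hw
        have hcdfy : codimfix y + 1 = codimfix w := by
          rw [codimfix, codimfix, hc0y]
          omega
        obtain ⟨l', hl', hprod', hlen'⟩ := ih y hGy (by omega)
        refine ⟨mkDiag v a :: l', ?_, ?_, ?_⟩
        · intro s hs
          rcases List.mem_cons.1 hs with rfl | hs
          · exact isRefl_mkDiag ha0 hφa
          · exact hl' s hs
        · rw [List.prod_cons, hprod', hydef, htdef, ← mul_assoc, mkDiag_mul_neg, one_mul]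
        · rw [List.length_cons]
          omega
      · -- a block with at least two weights : merge two cycles
        obtain ⟨b, hbB'⟩ := Multiset.exists_mem_of_ne_zero hB'
        obtain ⟨B'', rfl⟩ := Multiset.exists_cons_of_mem hbB'
        have hNZw : NZm w = a ::ₘ b ::ₘ (A' + B'') := by
          rw [hsplitNZ, Multiset.add_cons, Multiset.add_cons]
        have hb0 : b ≠ 0 := by
          have hmem : b ∈ NZm w := by
            rw [hNZw]
            exact Multiset.mem_cons_of_mem (Multiset.mem_cons_self b _)
          exact (Multiset.mem_filter.1 hmem).2
        have haWm : a ∈ Wm w := Multiset.mem_of_le (Multiset.filter_le _ _) haNZ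
        have hbWm : b ∈ (Wm w).erase a := by
          have hle1 : (NZm w).erase a ≤ (Wm w).erase a :=
            Multiset.erase_le_erase a (Multiset.filter_le _ _)
          apply Multiset.mem_of_le hle1
          rw [hNZw, Multiset.erase_cons_head]
          exact Multiset.mem_cons_self b _
        obtain ⟨C, D, hC, hD, hCD, hCa, hDb⟩ := exists_two_cycles haWm hbWm
        obtain ⟨i, hi⟩ := cycles_nonempty hC
        obtain ⟨j, hj⟩ := cycles_nonempty hD
        have hij : i ≠ j := by
          intro h
          exact hCD (cycles_eq_of_mem_mem hC hD hi (h ▸ hj))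
        have hnc : ¬ w.perm.SameCycle i j := not_sameCycle_of_cycles hC hD hCD hi hj
        set t := mkTrans i j (0 : ZMod m) with htdef
        set y := t * w with hydef
        obtain ⟨M, h1, h2, h3⟩ := surgery hij (0 : ZMod m) hnc
        rw [← hydef] at h2 h3
        have hwci : cycWt w (w.cycleOf i) = a := by rw [eq_cycleOf_of_mem_cycles hC hi, hCa]
        have hwcj : cycWt w (w.cycleOf j) = b := by rw [eq_cycleOf_of_mem_cycles hD hj, hDb]
        rw [hwci, hwcj] at h1 h3
        rw [h3] at h2
        have hfMeq : Multiset.filter (fun z : ZMod m => z ≠ 0) M = A' + B'' := by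
          have e1 : NZm w = a ::ₘ b ::ₘ Multiset.filter (fun z : ZMod m => z ≠ 0) M := by
            rw [NZm, h1, filter_ne_cons _ ha0, filter_ne_cons M hb0]
          rw [hNZw] at e1
          have e2 := (Multiset.cons_inj_right a).1 e1
          exact ((Multiset.cons_inj_right b).1 e2).symm
        have hGy : Gmem p hpm y := Gmem_mul (Gmem_mkTrans hij (0 : ZMod m)) hw
        have hsumB : ZMod.castHom hpm (ZMod p) (a + b + B''.sum) = 0 := by
          rw [Multiset.sum_cons, Multiset.sum_cons] at hφB
          rw [show a + b + B''.sum = a + (b + B''.sum) by ring]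
          exact hφB
        rcases eq_or_ne (a + b) 0 with hsum | hsum
        · -- merged weight zero
          have hNy : NZm y = A' + B'' := by
            rw [NZm, h2, hsum, filter_ne_cons_zero, hfMeq]
          have hccy : ∃ cy, cy ≤ cA + bCost (a ::ₘ b ::ₘ B'') ∧
              CanCost p hpm (A' + B'') cy := by
            rcases eq_or_ne B'' 0 with rfl | hB''
            · exact ⟨cA, by omega, by rwa [add_zero]⟩
            · refine ⟨cA + bCost B'', ?_, ?_⟩
              · have hd := bCost_drop2 a b B'' hsum
                omega
              · refine CanCost.block B'' hccA hB'' ?_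
                have e : (a ::ₘ b ::ₘ B'').sum = B''.sum := by
                  rw [Multiset.sum_cons, Multiset.sum_cons, ← add_assoc, hsum, zero_add]
                rw [← e]
                exact hφB
          obtain ⟨cy, hcy, hccy⟩ := hccy
          have hexy : exC p hpm y ≤ exC p hpm w := by
            have he := exC_le (w := y) (p := p) (hpm := hpm) (by rw [hNy]; exact hccy)
            omega
          have hc0y : c0 y = c0 w + 1 := by
            rw [c0_eq_count, c0_eq_count, h1, h2, hsum, Multiset.count_cons_self,
              Multiset.count_cons_of_ne (Ne.symm ha0), Multiset.count_cons_of_ne (Ne.symm hb0)]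
          have hc0yn : c0 y ≤ n := le_trans (c0_le_numCycles y) (numCycles_le y)
          have hcdfy : codimfix y + 1 = codimfix w := by
            rw [codimfix, codimfix, hc0y]
            omega
          obtain ⟨l', hl', hprod', hlen'⟩ := ih y hGy (by omega)
          refine ⟨t :: l', ?_, ?_, ?_⟩
          · intro s hs
            rcases List.mem_cons.1 hs with rfl | hs
            · exact isRefl_mkTrans hij (0 : ZMod m)
            · exact hl' s hs
          · rw [List.prod_cons, hprod', hydef, htdef]
            exact mkTrans_cancel hij (0 : ZMod m) w
          · rw [List.length_cons]
            omega
        · -- merged weight nonzero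
          have hNy : NZm y = (a + b) ::ₘ (A' + B'') := by
            rw [NZm, h2, filter_ne_cons M hsum, hfMeq]
          have hccy : CanCost p hpm ((a + b) ::ₘ (A' + B'')) (cA + bCost ((a + b) ::ₘ B'')) := by
            have hb2 := CanCost.block ((a + b) ::ₘ B'') hccA (by simp) (by
              rw [Multiset.sum_cons]
              exact hsumB)
            rwa [Multiset.add_cons] at hb2
          have hstrict := bCost_merge_strict a b B'' hsum
          have hexy : exC p hpm y + 1 ≤ exC p hpm w := by
            have he := exC_le (w := y) (p := p) (hpm := hpm) (by rw [hNy]; exact hccy)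
            omega
          have hc0y : c0 y = c0 w := by
            rw [c0_eq_count, c0_eq_count, h1, h2, Multiset.count_cons_of_ne (Ne.symm hsum),
              Multiset.count_cons_of_ne (Ne.symm ha0), Multiset.count_cons_of_ne (Ne.symm hb0)]
          have hcdfy : codimfix y = codimfix w := by
            rw [codimfix, codimfix, hc0y]
          obtain ⟨l', hl', hprod', hlen'⟩ := ih y hGy (by omega)
          refine ⟨t :: l', ?_, ?_, ?_⟩
          · intro s hs
            rcases List.mem_cons.1 hs with rfl | hs
            · exact isRefl_mkTrans hij (0 : ZMod m)
            · exact hl' s hs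
          · rw [List.prod_cons, hprod', hydef, htdef]
            exact mkTrans_cancel hij (0 : ZMod m) w
          · rw [List.length_cons]
            omega


/-! ### Extraction of a bad pair from an optimal partition -/

theorem mkTrans_inv {i j : Fin n} (hij : i ≠ j) (c : ZMod m) :
    (mkTrans i j c)⁻¹ = mkTrans i j c :=
  inv_eq_of_mul_eq_one_right (mkTrans_mul_self hij c)

theorem exists_bad_pair {p : ℕ} {hpm : p ∣ m} {A : Multiset (ZMod m)} {c : ℕ}
    (h : CanCost p hpm A c) (h0 : ∀ x ∈ A, x ≠ 0) (hc : 1 ≤ c)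
    (hmin : ∀ c', CanCost p hpm A c' → c ≤ c') :
    ∃ a b A' c', A = a ::ₘ b ::ₘ A' ∧ a + b ≠ 0 ∧ c' + 1 ≤ c ∧
      CanCost p hpm ((a + b) ::ₘ A') c' := by
  induction h with
  | zero => omega
  | @block A₀ c₀ B h₀ hB hφ ih =>
    by_cases hcB : bCost B = 0
    · -- the cost comes from `A₀`
      have hc₀ : 1 ≤ c₀ := by omega
      have hmin₀ : ∀ c', CanCost p hpm A₀ c' → c₀ ≤ c' := by
        intro c' hc'
        by_contra hltc
        push_neg at hltc
        have hm := hmin (c' + bCost B) (CanCost.block B hc' hB hφ)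
        omega
      have h0₀ : ∀ x ∈ A₀, x ≠ 0 := fun x hx => h0 x (Multiset.mem_add.2 (Or.inl hx))
      obtain ⟨a, b, A', c', hEq, hab, hcle, hcc⟩ := ih h0₀ hc₀ hmin₀
      refine ⟨a, b, A' + B, c' + bCost B, ?_, hab, by omega, ?_⟩
      · rw [hEq, Multiset.cons_add, Multiset.cons_add]
      · have hbl := CanCost.block B hcc hB hφ
        rwa [Multiset.cons_add] at hbl
    · -- the block `B` has positive cost, so it contains a bad pair
      have hpair : ∃ a b B', B = a ::ₘ b ::ₘ B' ∧ a + b ≠ 0 := by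
        by_contra hcon
        push_neg at hcon
        -- all pairs in B sum to zero; derive that B is a replicate and contradict minimality
        obtain ⟨x, B₁, rfl⟩ : ∃ x B₁, B = x ::ₘ B₁ := by
          obtain ⟨x, hx⟩ := Multiset.exists_mem_of_ne_zero hB
          obtain ⟨B₁, rfl⟩ := Multiset.exists_cons_of_mem hx
          exact ⟨x, B₁, rfl⟩
        obtain ⟨y, B₂, rfl⟩ : ∃ y B₂, B₁ = y ::ₘ B₂ := by
          rcases eq_or_ne B₁ 0 with rfl | hB₁
          · exfalso
            apply hcB
            exact bCost_singleton x
          · obtain ⟨y, hy⟩ := Multiset.exists_mem_of_ne_zero hB₁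
            obtain ⟨B₂, rfl⟩ := Multiset.exists_cons_of_mem hy
            exact ⟨y, B₂, rfl⟩
        have hxy : x + y = 0 := hcon x y B₂ rfl
        obtain ⟨z, B₃, rfl⟩ : ∃ z B₃, B₂ = z ::ₘ B₃ := by
          rcases eq_or_ne B₂ 0 with rfl | hB₂
          · exfalso
            apply hcB
            rw [bCost, if_pos (by
              rw [Multiset.sum_cons, Multiset.sum_cons, Multiset.sum_zero, add_zero]
              exact hxy)]
            simp
          · obtain ⟨z, hz⟩ := Multiset.exists_mem_of_ne_zero hB₂
            obtain ⟨B₃, rfl⟩ := Multiset.exists_cons_of_mem hz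
            exact ⟨z, B₃, rfl⟩
        have hxz : x + z = 0 := hcon x z (y ::ₘ B₃) (by rw [Multiset.cons_swap y z])
        have hyz : y + z = 0 := by
          have := hcon y z (x ::ₘ B₃) ?_
          · exact this
          · rw [Multiset.cons_swap x y, Multiset.cons_swap x z]
        have h2x : x + x = 0 := by
          have hy' : y = -x := eq_neg_of_add_eq_zero_right hxy
          have hz' : z = -x := eq_neg_of_add_eq_zero_right hxz
          rw [hy', hz'] at hyz
          have : x + x = -(-x + -x) := by ring
          rw [this, hyz, neg_zero]
        have hall : ∀ u ∈ (x ::ₘ y ::ₘ z ::ₘ B₃), u = x := by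
          intro u hu
          rcases Multiset.mem_cons.1 hu with rfl | hu'
          · rfl
          · obtain ⟨B₄, hB₄⟩ := Multiset.exists_cons_of_mem hu'
            have hxu : x + u = 0 := hcon x u B₄ (by rw [hB₄])
            have : u = -x := eq_neg_of_add_eq_zero_right hxu
            rw [this, show -x = x from by
              have := eq_neg_of_add_eq_zero_right h2x
              exact this.symm]
        set B := (x ::ₘ y ::ₘ z ::ₘ B₃) with hBdef
        set kB := B.card with hkB
        have hBrep : B = Multiset.replicate kB x := Multiset.eq_replicate_card.2 hall
        have hkB3 : 3 ≤ kB := by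
          rw [hkB, hBdef]
          simp
        -- the cheaper partition
        have hrepsplit : Multiset.replicate kB x =
            Multiset.replicate (kB - 2) x + (x ::ₘ x ::ₘ 0) := by
          have e2 : (x ::ₘ x ::ₘ (0 : Multiset (ZMod m))) = Multiset.replicate 2 x := rfl
          rw [e2, ← Multiset.replicate_add]
          congr 1
          omega
        have hsums : (Multiset.replicate (kB - 2) x).sum = B.sum := by
          have e1 : B.sum = (Multiset.replicate (kB - 2) x).sum + (x + x) := by
            conv_lhs => rw [hBrep, hrepsplit]
            rw [Multiset.sum_add]
            congr 1
            simp [Multiset.sum_cons]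
          rw [e1, h2x, add_zero]
        have hQne : Multiset.replicate (kB - 2) x ≠ 0 := by
          intro hQ
          have := Multiset.card_replicate (kB - 2) x
          rw [hQ] at this
          simp at this
          omega
        have hcc1 := CanCost.block (Multiset.replicate (kB - 2) x) h₀ hQne
          (by rw [hsums]; exact hφ)
        have hcc2 := CanCost.block (x ::ₘ x ::ₘ (0 : Multiset (ZMod m))) hcc1 (by simp)
          (by rw [show (x ::ₘ x ::ₘ (0 : Multiset (ZMod m))).sum = x + x from by
                simp [Multiset.sum_cons], h2x, RingHom.map_zero])
        have hEqA : A₀ + Multiset.replicate (kB - 2) x + (x ::ₘ x ::ₘ 0) = A₀ + B := by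
          rw [add_assoc]
          congr 1
          rw [hBrep, hrepsplit]
        have hbP : bCost (x ::ₘ x ::ₘ (0 : Multiset (ZMod m))) = 0 := by
          rw [bCost, if_pos (by simp [Multiset.sum_cons, h2x])]
          simp
        have hlt : bCost (Multiset.replicate (kB - 2) x) < bCost B := by
          rw [bCost, bCost, hsums, Multiset.card_replicate, ← hkB]
          split <;> omega
        rw [hEqA] at hcc2
        have := hmin _ hcc2
        omega
      obtain ⟨a, b, B', hBEq, hab⟩ := hpair
      refine ⟨a, b, A₀ + B', c₀ + bCost ((a + b) ::ₘ B'), ?_, hab, ?_, ?_⟩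
      · rw [hBEq, Multiset.add_cons, Multiset.add_cons]
      · have := bCost_merge_strict a b B' hab
        rw [← hBEq] at this
        omega
      · have hbl := CanCost.block ((a + b) ::ₘ B') h₀ (by simp) (by
          rw [Multiset.sum_cons, show a + b + B'.sum = (a ::ₘ b ::ₘ B').sum from by
            simp [Multiset.sum_cons]; ring, ← hBEq]
          exact hφ)
        rwa [Multiset.add_cons] at hbl

/-! ### The main theorem -/

theorem main_thm {p : ℕ} (hpm : p ∣ m) (w : GW m n) (hw : Gmem p hpm w)
    (hlt : codimfix w < lR p hpm w) :
    ∃ t : GW m n, IsRefl p hpm t ∧ t ∈ interval p hpm (lR p hpm) w ∧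
      t ∉ interval p hpm codimfix w := by
  classical
  -- the value of lR
  obtain ⟨l₀, hl₀, hprod₀, hlen₀⟩ :=
    upper_bound (p := p) (hpm := hpm) (codimfix w + exC p hpm w) w hw le_rfl
  have hlRle : lR p hpm w ≤ codimfix w + exC p hpm w :=
    le_trans (Nat.sInf_le ⟨l₀, hl₀, rfl, hprod₀⟩) hlen₀
  have hSwne : {k | ∃ l : List (GW m n), (∀ t ∈ l, IsRefl p hpm t) ∧ l.length = k ∧
      l.prod = w}.Nonempty := ⟨l₀.length, l₀, hl₀, rfl, hprod₀⟩
  have hlRdef : lR p hpm w = sInf {k | ∃ l : List (GW m n),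
      (∀ t ∈ l, IsRefl p hpm t) ∧ l.length = k ∧ l.prod = w} := rfl
  obtain ⟨l₁, hl₁, hlen₁, hprod₁⟩ := Nat.sInf_mem hSwne
  rw [← hlRdef] at hlen₁
  obtain ⟨c₁, hcc₁, hb₁⟩ := lower_bound l₁ hl₁
  rw [hprod₁] at hcc₁ hb₁
  rw [hlen₁] at hb₁
  have hexc₁ : exC p hpm w ≤ c₁ := exC_le hcc₁
  have hlReq : lR p hpm w = codimfix w + exC p hpm w := by
    have : codimfix w + exC p hpm w ≤ lR p hpm w := by omega
    omega
  have hex1 : 1 ≤ exC p hpm w := by omega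
  -- extract a bad pair
  obtain ⟨a, b, A', c', hAEq, hab, hcle, hcc'⟩ :=
    exists_bad_pair (exC_spec hw) (fun x hx => (Multiset.mem_filter.1 hx).2) hex1
      (fun c' h => exC_le h)
  -- find the two distinct cycles
  have ha0 : a ≠ 0 := by
    have : a ∈ NZm w := by rw [hAEq]; exact Multiset.mem_cons_self _ _
    exact (Multiset.mem_filter.1 this).2
  have hb0 : b ≠ 0 := by
    have : b ∈ NZm w := by
      rw [hAEq]; exact Multiset.mem_cons_of_mem (Multiset.mem_cons_self _ _)
    exact (Multiset.mem_filter.1 this).2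
  have haNZ' : a ∈ NZm w := by rw [hAEq]; exact Multiset.mem_cons_self _ _
  have haWm : a ∈ Wm w := Multiset.mem_of_le (Multiset.filter_le _ _) haNZ'
  have hbWm : b ∈ (Wm w).erase a := by
    have hle1 : (NZm w).erase a ≤ (Wm w).erase a :=
      Multiset.erase_le_erase a (Multiset.filter_le _ _)
    apply Multiset.mem_of_le hle1
    rw [hAEq, Multiset.erase_cons_head]
    exact Multiset.mem_cons_self b _
  obtain ⟨C, D, hC, hD, hCD, hCa, hDb⟩ := exists_two_cycles haWm hbWm
  obtain ⟨i, hi⟩ := cycles_nonempty hC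
  obtain ⟨j, hj⟩ := cycles_nonempty hD
  have hij : i ≠ j := by
    intro h
    exact hCD (cycles_eq_of_mem_mem hC hD hi (h ▸ hj))
  have hnc : ¬ w.perm.SameCycle i j := not_sameCycle_of_cycles hC hD hCD hi hj
  set t := mkTrans i j (0 : ZMod m) with htdef
  set y := t * w with hydef
  obtain ⟨M, h1, h2, h3⟩ := surgery hij (0 : ZMod m) hnc
  rw [← hydef] at h2 h3
  have hwci : cycWt w (w.cycleOf i) = a := by rw [eq_cycleOf_of_mem_cycles hC hi, hCa]
  have hwcj : cycWt w (w.cycleOf j) = b := by rw [eq_cycleOf_of_mem_cycles hD hj, hDb]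
  rw [hwci, hwcj] at h1 h3
  rw [h3] at h2
  have hfMeq : Multiset.filter (fun z : ZMod m => z ≠ 0) M = A' := by
    have e1 : NZm w = a ::ₘ b ::ₘ Multiset.filter (fun z : ZMod m => z ≠ 0) M := by
      rw [NZm, h1, filter_ne_cons _ ha0, filter_ne_cons M hb0]
    rw [hAEq] at e1
    have e2 := (Multiset.cons_inj_right a).1 e1
    exact ((Multiset.cons_inj_right b).1 e2).symm
  have hNy : NZm y = (a + b) ::ₘ A' := by
    rw [NZm, h2, filter_ne_cons M hab, hfMeq]
  have hGt : Gmem p hpm t := Gmem_mkTrans hij (0 : ZMod m)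
  have hGy : Gmem p hpm y := Gmem_mul hGt hw
  have ht_refl : IsRefl p hpm t := isRefl_mkTrans hij (0 : ZMod m)
  have hexy : exC p hpm y ≤ c' := exC_le (by rw [hNy]; exact hcc')
  have hc0y : c0 y = c0 w := by
    rw [c0_eq_count, c0_eq_count, h1, h2, Multiset.count_cons_of_ne (Ne.symm hab),
      Multiset.count_cons_of_ne (Ne.symm ha0), Multiset.count_cons_of_ne (Ne.symm hb0)]
  have hcdfy : codimfix y = codimfix w := by
    rw [codimfix, codimfix, hc0y]
  -- lR of y
  obtain ⟨ly, hly, hprody, hleny⟩ :=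
    upper_bound (p := p) (hpm := hpm) (codimfix y + exC p hpm y) y hGy le_rfl
  have hlRyle : lR p hpm y ≤ codimfix y + exC p hpm y :=
    le_trans (Nat.sInf_le ⟨ly, hly, rfl, hprody⟩) hleny
  have hSyne : {k | ∃ l : List (GW m n), (∀ t ∈ l, IsRefl p hpm t) ∧ l.length = k ∧
      l.prod = y}.Nonempty := ⟨ly.length, ly, hly, rfl, hprody⟩
  have hlRydef : lR p hpm y = sInf {k | ∃ l : List (GW m n),
      (∀ t ∈ l, IsRefl p hpm t) ∧ l.length = k ∧ l.prod = y} := rfl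
  obtain ⟨ly', hly', hleny', hprody'⟩ := Nat.sInf_mem hSyne
  rw [← hlRydef] at hleny'
  have htyw : t * y = w := by
    rw [hydef, htdef]
    exact mkTrans_cancel hij (0 : ZMod m) w
  have hlRwle : lR p hpm w ≤ lR p hpm y + 1 := by
    apply Nat.sInf_le
    refine ⟨t :: ly', ?_, ?_, ?_⟩
    · intro s hs
      rcases List.mem_cons.1 hs with rfl | hs
      · exact ht_refl
      · exact hly' s hs
    · rw [List.length_cons, hleny']
    · rw [List.prod_cons, hprody']
      exact htyw
  have hlRy : lR p hpm y + 1 = lR p hpm w := by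
    have h1' : lR p hpm y ≤ codimfix w + exC p hpm y := by
      rw [← hcdfy]; exact hlRyle
    omega
  -- lR t = 1
  have hlRt : lR p hpm t = 1 := by
    have hle1 : lR p hpm t ≤ 1 := by
      apply Nat.sInf_le
      exact ⟨[t], by intro s hs; rw [List.mem_singleton] at hs; rw [hs]; exact ht_refl,
        rfl, by simp⟩
    rcases Nat.eq_zero_or_pos (lR p hpm t) with h0 | hpos
    · exfalso
      rcases Nat.sInf_eq_zero.1 h0 with hmem0 | hemp
      · obtain ⟨l', hl', hlen', hprod'⟩ := hmem0
        have hnil : l' = [] := List.length_eq_zero_iff.1 hlen'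
        rw [hnil, List.prod_nil] at hprod'
        have hcdft := ht_refl.2
        rw [← hprod', cdf_one] at hcdft
        omega
      · have : (1 : ℕ) ∈ {k | ∃ l : List (GW m n), (∀ s ∈ l, IsRefl p hpm s) ∧
            l.length = k ∧ l.prod = t} :=
          ⟨[t], by intro s hs; rw [List.mem_singleton] at hs; rw [hs]; exact ht_refl,
            rfl, by simp⟩
        rw [hemp] at this
        exact this
    · omega
  refine ⟨t, ht_refl, ⟨hGt, ?_⟩, ?_⟩
  · -- leF (lR p hpm) t w
    show lR p hpm t + lR p hpm (t⁻¹ * w) = lR p hpm w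
    rw [htdef, mkTrans_inv hij, ← htdef, ← hydef, hlRt, add_comm]
    exact hlRy
  · -- not in the codimfix interval
    intro hmem
    obtain ⟨-, hleF⟩ := hmem
    have hleF' : codimfix t + codimfix (t⁻¹ * w) = codimfix w := hleF
    rw [htdef, mkTrans_inv hij, ← htdef, ← hydef, hcdfy, ht_refl.2] at hleF'
    omega

end GW

/-- Let `w ∈ G(m,p,n)`.  If `ℓ_R(w) > codimfix(w)`, then there exists a reflection `t`
of `G(m,p,n)` such that `t ∈ [id, w]_{ℓ_R}` but `t ∉ [id, w]_{cdf}`. -/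
theorem stmt3 (m p n : ℕ) (hm : 0 < m) (hp : 0 < p) (hn : 0 < n) (hpm : p ∣ m)
    (w : GW m n) (hw : GW.Gmem p hpm w)
    (hlt : GW.codimfix w < GW.lR p hpm w) :
    ∃ t : GW m n, GW.IsRefl p hpm t ∧
      t ∈ GW.interval p hpm (GW.lR p hpm) w ∧
      t ∉ GW.interval p hpm GW.codimfix w :=
  GW.main_thm hpm w hw hlt
end

section
/- Let W be a finite subgroup of GL(V) for a finite-dimensional complex vector space V, generated by its set R of reflections (elements whose fixed space ker(t − 1) has codimension 1), let ℓ_R be the reflection length and codimfix(g) := dim V − dim ker(g − 1). Let w ∈ W with ℓ_R(w) = codimfix(w). Then [id, w]_{ℓ_R} ⊆ [id, w]_{cdf}, and moreover ℓ_R(u) = codimfix(u) for every u ∈ [id, w]_{ℓ_R}. -/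
namespace CRG

variable {V : Type*} [AddCommGroup V] [Module ℂ V] [FiniteDimensional ℂ V]

/-- The codimension of the fixed space of an invertible linear map `g` on `V`:
`codimfix g = dim V − dim ker(g − 1)`. -/
noncomputable def cdf (g : (V →ₗ[ℂ] V)ˣ) : ℕ :=
  Module.finrank ℂ V - Module.finrank ℂ (LinearMap.ker ((g : V →ₗ[ℂ] V) - LinearMap.id))

/-- `t` is a reflection of the group `W ⊆ GL(V)`: an element of `W` whose fixed space has
codimension 1. -/
def IsRefl (W : Subgroup (V →ₗ[ℂ] V)ˣ) (t : (V →ₗ[ℂ] V)ˣ) : Prop :=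
  t ∈ W ∧ cdf t = 1

/-- The reflection length of `w`: the least `k` such that `w` is a product of `k`
reflections of `W`. -/
noncomputable def lR (W : Subgroup (V →ₗ[ℂ] V)ˣ) (w : (V →ₗ[ℂ] V)ˣ) : ℕ :=
  sInf {k | ∃ l : List (V →ₗ[ℂ] V)ˣ, (∀ t ∈ l, IsRefl W t) ∧ l.length = k ∧ l.prod = w}

/-- The order `≤_f` determined by a subadditive function `f`:
`x ≤_f y ↔ f x + f (x⁻¹y) = f y`. -/
def leF (f : (V →ₗ[ℂ] V)ˣ → ℕ) (x y : (V →ₗ[ℂ] V)ˣ) : Prop :=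
  f x + f (x⁻¹ * y) = f y

/-- The interval `[id, w]_f` inside the poset `(W, ≤_f)`. -/
def interval (W : Subgroup (V →ₗ[ℂ] V)ˣ) (f : (V →ₗ[ℂ] V)ˣ → ℕ) (w : (V →ₗ[ℂ] V)ˣ) :
    Set (V →ₗ[ℂ] V)ˣ :=
  {u | u ∈ W ∧ leF f u w}

lemma mem_fix_iff (g : (V →ₗ[ℂ] V)ˣ) (x : V) :
    x ∈ LinearMap.ker ((g : V →ₗ[ℂ] V) - LinearMap.id) ↔ (g : V →ₗ[ℂ] V) x = x := by
  simp [LinearMap.mem_ker, LinearMap.sub_apply, sub_eq_zero]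

lemma fix_inv (g : (V →ₗ[ℂ] V)ˣ) :
    LinearMap.ker (((g⁻¹ : (V →ₗ[ℂ] V)ˣ) : V →ₗ[ℂ] V) - LinearMap.id)
      = LinearMap.ker ((g : V →ₗ[ℂ] V) - LinearMap.id) := by
  ext x
  rw [mem_fix_iff, mem_fix_iff]
  constructor
  · intro h
    conv_lhs => rw [← h]
    rw [← Module.End.mul_apply, Units.mul_inv, Module.End.one_apply]
  · intro h
    conv_lhs => rw [← h]
    rw [← Module.End.mul_apply, Units.inv_mul, Module.End.one_apply]

lemma cdf_inv (g : (V →ₗ[ℂ] V)ˣ) : cdf g⁻¹ = cdf g := by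
  unfold cdf; rw [fix_inv]

lemma cdf_one : cdf (1 : (V →ₗ[ℂ] V)ˣ) = 0 := by
  unfold cdf
  have : ((1 : (V →ₗ[ℂ] V)ˣ) : V →ₗ[ℂ] V) - LinearMap.id = 0 := by
    ext x; simp
  rw [this, LinearMap.ker_zero, finrank_top]
  omega

lemma cdf_mul_le (g h : (V →ₗ[ℂ] V)ˣ) : cdf (g * h) ≤ cdf g + cdf h := by
  have hAB : LinearMap.ker ((g : V →ₗ[ℂ] V) - LinearMap.id)
      ⊓ LinearMap.ker ((h : V →ₗ[ℂ] V) - LinearMap.id)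
      ≤ LinearMap.ker (((g * h : (V →ₗ[ℂ] V)ˣ) : V →ₗ[ℂ] V) - LinearMap.id) := by
    intro x hx
    have ha := (mem_fix_iff g x).1 hx.1
    have hb := (mem_fix_iff h x).1 hx.2
    exact (mem_fix_iff (g * h) x).2 (by rw [Units.val_mul, Module.End.mul_apply, hb, ha])
  have h1 := Submodule.finrank_mono hAB
  have h2 := Submodule.finrank_sup_add_finrank_inf_eq
    (LinearMap.ker ((g : V →ₗ[ℂ] V) - LinearMap.id))
    (LinearMap.ker ((h : V →ₗ[ℂ] V) - LinearMap.id))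
  have h3 : Module.finrank ℂ (LinearMap.ker ((g : V →ₗ[ℂ] V) - LinearMap.id)
      ⊔ LinearMap.ker ((h : V →ₗ[ℂ] V) - LinearMap.id) : Submodule ℂ V)
      ≤ Module.finrank ℂ V := Submodule.finrank_le _
  have h4 : Module.finrank ℂ (LinearMap.ker ((g : V →ₗ[ℂ] V) - LinearMap.id))
      ≤ Module.finrank ℂ V := Submodule.finrank_le _
  have h5 : Module.finrank ℂ (LinearMap.ker ((h : V →ₗ[ℂ] V) - LinearMap.id))
      ≤ Module.finrank ℂ V := Submodule.finrank_le _
  have h6 : Module.finrank ℂ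
      (LinearMap.ker (((g * h : (V →ₗ[ℂ] V)ˣ) : V →ₗ[ℂ] V) - LinearMap.id))
      ≤ Module.finrank ℂ V := Submodule.finrank_le _
  unfold cdf
  omega

lemma cdf_list_prod_le (W : Subgroup (V →ₗ[ℂ] V)ˣ) (l : List (V →ₗ[ℂ] V)ˣ)
    (hl : ∀ t ∈ l, IsRefl W t) : cdf l.prod ≤ l.length := by
  induction l with
  | nil => simp [cdf_one]
  | cons a l ih =>
    rw [List.prod_cons, List.length_cons]
    calc cdf (a * l.prod) ≤ cdf a + cdf l.prod := cdf_mul_le a l.prod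
      _ ≤ 1 + l.length := by
          have := (hl a List.mem_cons_self).2
          have := ih (fun t ht => hl t (List.mem_cons_of_mem a ht))
          omega
      _ = l.length + 1 := by omega

lemma exists_refl_list (W : Subgroup (V →ₗ[ℂ] V)ˣ)
    (hgen : Subgroup.closure {t | IsRefl W t} = W)
    {w : (V →ₗ[ℂ] V)ˣ} (hw : w ∈ W) :
    ∃ l : List (V →ₗ[ℂ] V)ˣ, (∀ t ∈ l, IsRefl W t) ∧ l.prod = w := by
  rw [← hgen] at hw
  induction hw using Subgroup.closure_induction with
  | mem x hx => exact ⟨[x], by simpa using hx, by simp⟩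
  | one => exact ⟨[], by simp, by simp⟩
  | mul x y hx hy ihx ihy =>
    obtain ⟨l1, h1, p1⟩ := ihx
    obtain ⟨l2, h2, p2⟩ := ihy
    refine ⟨l1 ++ l2, ?_, by rw [List.prod_append, p1, p2]⟩
    intro t ht
    rcases List.mem_append.1 ht with h | h
    exacts [h1 t h, h2 t h]
  | inv x hx ih =>
    obtain ⟨l, h1, p1⟩ := ih
    refine ⟨(l.map (·⁻¹)).reverse, ?_, ?_⟩
    · intro t ht
      rw [List.mem_reverse, List.mem_map] at ht
      obtain ⟨s, hs, rfl⟩ := ht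
      exact ⟨inv_mem (h1 s hs).1, by rw [cdf_inv]; exact (h1 s hs).2⟩
    · rw [List.prod_reverse_noncomm, ← p1]
      simp

lemma lR_set_nonempty (W : Subgroup (V →ₗ[ℂ] V)ˣ)
    (hgen : Subgroup.closure {t | IsRefl W t} = W)
    {w : (V →ₗ[ℂ] V)ˣ} (hw : w ∈ W) :
    {k | ∃ l : List (V →ₗ[ℂ] V)ˣ, (∀ t ∈ l, IsRefl W t) ∧ l.length = k ∧ l.prod = w}.Nonempty := by
  obtain ⟨l, h1, h2⟩ := exists_refl_list W hgen hw
  exact ⟨l.length, l, h1, rfl, h2⟩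

lemma cdf_le_lR (W : Subgroup (V →ₗ[ℂ] V)ˣ)
    (hgen : Subgroup.closure {t | IsRefl W t} = W)
    {w : (V →ₗ[ℂ] V)ˣ} (hw : w ∈ W) : cdf w ≤ lR W w := by
  obtain ⟨l, h1, h2, h3⟩ := Nat.sInf_mem (lR_set_nonempty W hgen hw)
  rw [lR, ← h2, ← h3]
  exact cdf_list_prod_le W l h1

lemma lR_mul_le (W : Subgroup (V →ₗ[ℂ] V)ˣ)
    (hgen : Subgroup.closure {t | IsRefl W t} = W)
    {g h : (V →ₗ[ℂ] V)ˣ} (hg : g ∈ W) (hh : h ∈ W) :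
    lR W (g * h) ≤ lR W g + lR W h := by
  obtain ⟨l1, a1, a2, a3⟩ := Nat.sInf_mem (lR_set_nonempty W hgen hg)
  obtain ⟨l2, b1, b2, b3⟩ := Nat.sInf_mem (lR_set_nonempty W hgen hh)
  apply Nat.sInf_le
  refine ⟨l1 ++ l2, ?_, by simp [a2, b2, lR], by rw [List.prod_append, a3, b3]⟩
  intro t ht
  rcases List.mem_append.1 ht with h | h
  exacts [a1 t h, b1 t h]

end CRG

open CRG

/-- Let `W` be a finite complex reflection group (a finite subgroup of `GL(V)` generated
by its reflections) and `w ∈ W` with `ℓ_R(w) = codimfix(w)`.  Then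
`[id, w]_{ℓ_R} ⊆ [id, w]_{cdf}`, and moreover `ℓ_R(u) = codimfix(u)` for every
`u ∈ [id, w]_{ℓ_R}`. -/
theorem stmt4 {V : Type*} [AddCommGroup V] [Module ℂ V] [FiniteDimensional ℂ V]
    (W : Subgroup (V →ₗ[ℂ] V)ˣ) (hfin : Finite W)
    (hgen : Subgroup.closure {t | CRG.IsRefl W t} = W)
    (w : (V →ₗ[ℂ] V)ˣ) (hw : w ∈ W)
    (heq : lR W w = cdf w) :
    interval W (lR W) w ⊆ interval W cdf w ∧
    ∀ u ∈ interval W (lR W) w, lR W u = cdf u := by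
  have key : ∀ u ∈ interval W (lR W) w,
      lR W u = cdf u ∧ cdf u + cdf (u⁻¹ * w) = cdf w := by
    intro u hu
    obtain ⟨huW, hle⟩ := hu
    have hvW : u⁻¹ * w ∈ W := mul_mem (inv_mem huW) hw
    have h1 : cdf u ≤ lR W u := cdf_le_lR W hgen huW
    have h2 : cdf (u⁻¹ * w) ≤ lR W (u⁻¹ * w) := cdf_le_lR W hgen hvW
    have h3 : cdf w ≤ cdf u + cdf (u⁻¹ * w) := by
      have := cdf_mul_le u (u⁻¹ * w)
      rwa [mul_inv_cancel_left] at this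
    have hle' : lR W u + lR W (u⁻¹ * w) = lR W w := hle
    omega
  exact ⟨fun u hu => ⟨hu.1, (key u hu).2⟩, fun u hu => (key u hu).1⟩
end
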